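/- arXiv:1902.09783 — 11 statements merged into one kernel-verified Lean document; each statement's English description precedes it below -/
import Mathlib

section
/- Let P = (X, Y, R) be a polarity and let f be an n-ary complete normal operator on the stable set lattice P⁺, i.e. for each coordinate i < n, every n-tuple A⃗ of stable sets and every (possibly empty) family {B_j}_{j∈J} of stable sets, f(A⃗[⋁_J B_j / i]) = ⋁_J f(A⃗[B_j / i]), where ⋁𝒞 = λ_R ρ_R(⋃𝒞) and A⃗[B/i] replaces the i-th entry of A⃗ by B. Define S_f ⊆ Xⁿ × Y by: x⃗ S_f y iff y ∈ ρ_R(f(⟨x₀⟩, …, ⟨x_{n−1}⟩)), where ⟨x⟩ = λ_R ρ_R {x}. Then for every n-tuple A⃗ of stable subsets of X, f(A⃗) = f_{S_f}(A⃗). -/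
/-- The right polar `ρ_R A = {y ∈ Y : ∀ x ∈ A, x R y}`. -/
def rpolar {X Y : Type*} (R : X → Y → Prop) (A : Set X) : Set Y := {y | ∀ x ∈ A, R x y}

/-- The left polar `λ_R B = {x ∈ X : ∀ y ∈ B, x R y}`. -/
def lpolar {X Y : Type*} (R : X → Y → Prop) (B : Set Y) : Set X := {x | ∀ y ∈ B, R x y}

/-- `A ⊆ X` is stable if `A = λ_R (ρ_R A)`. -/
def StableX {X Y : Type*} (R : X → Y → Prop) (A : Set X) : Prop := A = lpolar R (rpolar R A)

/-- `B ⊆ Y` is stable if `B = ρ_R (λ_R B)`. -/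
def StableY {X Y : Type*} (R : X → Y → Prop) (B : Set Y) : Prop := B = rpolar R (lpolar R B)

/-- The quasi-order `≤₁` on `X`. -/
def le1 {X Y : Type*} (R : X → Y → Prop) (x x' : X) : Prop := rpolar R {x} ⊆ rpolar R {x'}

/-- The quasi-order `≤₂` on `Y`. -/
def le2 {X Y : Type*} (R : X → Y → Prop) (y y' : Y) : Prop := lpolar R {y} ⊆ lpolar R {y'}

/-- The operator `f_S` induced on stable sets by `S ⊆ Xⁿ × Y`. -/
def fS {X Y : Type*} {n : ℕ} (R : X → Y → Prop) (S : (Fin n → X) → Y → Prop)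
    (A : Fin n → Set X) : Set X :=
  lpolar R {y | ∀ xs : Fin n → X, (∀ i, xs i ∈ A i) → S xs y}

/-- The dual operator `g_T` induced on stable sets by `T ⊆ X × Yᵐ`. -/
def gT {X Y : Type*} {m : ℕ} (R : X → Y → Prop) (T : X → (Fin m → Y) → Prop)
    (A : Fin m → Set X) : Set X :=
  {x | ∀ ys : Fin m → Y, (∀ i, ys i ∈ rpolar R (A i)) → T x ys}

/-- All sections of `S ⊆ Xⁿ × Y` are stable. -/
def SSectionsStable {X Y : Type*} {n : ℕ} (R : X → Y → Prop)
    (S : (Fin n → X) → Y → Prop) : Prop :=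
  (∀ xs : Fin n → X, StableY R {y | S xs y}) ∧
  (∀ (xs : Fin n → X) (i : Fin n) (y : Y), StableX R {x' | S (Function.update xs i x') y})

/-- All sections of `T ⊆ X × Yᵐ` are stable. -/
def TSectionsStable {X Y : Type*} {m : ℕ} (R : X → Y → Prop)
    (T : X → (Fin m → Y) → Prop) : Prop :=
  (∀ ys : Fin m → Y, StableX R {x | T x ys}) ∧
  (∀ (x : X) (ys : Fin m → Y) (i : Fin m), StableY R {y' | T x (Function.update ys i y')})

section helpers
variable {X Y : Type*} (R : X → Y → Prop)

lemma subset_lrp (A : Set X) : A ⊆ lpolar R (rpolar R A) :=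
  fun x hx y hy => hy x hx

lemma rpolar_anti {A B : Set X} (h : A ⊆ B) : rpolar R B ⊆ rpolar R A :=
  fun y hy x hx => hy x (h hx)

lemma rp_lrp (A : Set X) : rpolar R (lpolar R (rpolar R A)) = rpolar R A := by
  apply Set.Subset.antisymm
  · exact rpolar_anti R (subset_lrp R A)
  · intro y hy x hx
    exact hx y hy

lemma stable_lp (B : Set Y) : StableX R (lpolar R B) := by
  apply Set.Subset.antisymm (subset_lrp R _)
  intro x hx y hy
  exact hx y (fun x' hx' => hx' y hy)

lemma mem_rp_iUnion {ι : Sort*} (T : ι → Set X) (y : Y) :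
    y ∈ rpolar R (⋃ i, T i) ↔ ∀ i, y ∈ rpolar R (T i) := by
  constructor
  · exact fun h i x hx => h x (Set.mem_iUnion.2 ⟨i, hx⟩)
  · intro h x hx
    obtain ⟨i, hxi⟩ := Set.mem_iUnion.1 hx
    exact h i x hxi

lemma mem_rp_biUnion {s : Set X} (T : X → Set X) (y : Y) :
    y ∈ rpolar R (⋃ x ∈ s, T x) ↔ ∀ x ∈ s, y ∈ rpolar R (T x) := by
  constructor
  · exact fun h x hx x' hx' => h x' (Set.mem_biUnion hx hx')
  · intro h x hx
    obtain ⟨x', hx', hxx'⟩ := Set.mem_iUnion₂.1 hx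
    exact h x' hx' x hxx'

end helpers

/-- Every complete normal `n`-ary operator `f` on the stable set lattice `P⁺` of a
polarity is determined by the relation `S_f` defined by
`x⃗ S_f y  iff  y ∈ ρ_R (f ⟨x₀⟩ … ⟨x_{n−1}⟩)` where `⟨x⟩ = λ_R ρ_R {x}`:
for every tuple of stable sets, `f A⃗ = f_{S_f} A⃗`. -/
theorem stmt1 {X Y : Type*} {n : ℕ} (R : X → Y → Prop)
    (f : (Fin n → Set X) → Set X)
    (hf_stable : ∀ A : Fin n → Set X, (∀ i, StableX R (A i)) → StableX R (f A))
    (hf_complete : ∀ (i : Fin n) (A : Fin n → Set X), (∀ j, StableX R (A j)) →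
      ∀ 𝒞 : Set (Set X), (∀ B ∈ 𝒞, StableX R B) →
        f (Function.update A i (lpolar R (rpolar R (⋃₀ 𝒞)))) =
          lpolar R (rpolar R (⋃ B ∈ 𝒞, f (Function.update A i B))))
    (A : Fin n → Set X) (hA : ∀ i, StableX R (A i)) :
    f A = fS R
      (fun xs y => y ∈ rpolar R (f (fun i => lpolar R (rpolar R {xs i})))) A := by
  classical
  set bk : X → Set X := fun x => lpolar R (rpolar R {x}) with hbk
  have key : ∀ k : ℕ, k ≤ n →
      f A = lpolar R (rpolar R
        (⋃ g : {g : Fin n → X // ∀ i, g i ∈ A i},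
          f (fun i => if (i : ℕ) < k then bk (g.1 i) else A i))) := by
    intro k
    induction k with
    | zero =>
      intro _
      simp only [Nat.not_lt_zero, if_false]
      by_cases hne : Nonempty {g : Fin n → X // ∀ i, g i ∈ A i}
      · rw [Set.iUnion_const]
        exact hf_stable A hA
      · have hemp : ∃ i, A i = ∅ := by
          by_contra h
          push_neg at h
          exact hne ⟨⟨fun i => (h i).choose, fun i => (h i).choose_spec⟩⟩
        obtain ⟨i, hi⟩ := hemp
        have h0 := hf_complete i A hA ∅ (by simp)
        have h1 : lpolar R (rpolar R (⋃₀ (∅ : Set (Set X)))) = A i := by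
          rw [Set.sUnion_empty, ← hi]
          exact (hA i).symm
        rw [h1, Function.update_eq_self] at h0
        have h2 : (⋃ B ∈ (∅ : Set (Set X)), f (Function.update A i B)) = ∅ := by simp
        rw [h2] at h0
        haveI := not_nonempty_iff.1 hne
        rw [Set.iUnion_of_empty]
        exact h0
    | succ k ih =>
      intro hk
      have ih' := ih (Nat.le_of_succ_le hk)
      have hk' : k < n := hk
      set k' : Fin n := ⟨k, hk'⟩ with hk'def
      set Ck : (Fin n → X) → Fin n → Set X :=
        fun g i => if (i : ℕ) < k then bk (g i) else A i with hCk
      set Ck1 : (Fin n → X) → Fin n → Set X :=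
        fun g i => if (i : ℕ) < k + 1 then bk (g i) else A i with hCk1
      have hCkstab : ∀ g i, StableX R (Ck g i) := by
        intro g i
        simp only [hCk]
        split
        · exact stable_lp R _
        · exact hA i
      have upd_eq : ∀ (g : Fin n → X) (x : X),
          Function.update (Ck g) k' (bk x) = Ck1 (Function.update g k' x) := by
        intro g x
        funext i
        by_cases hik : i = k'
        · subst hik
          simp [hCk1]
          exact fun h => absurd h (lt_irrefl _)
        · rw [Function.update_of_ne hik]
          have hne : (i : ℕ) ≠ k := fun h => hik (Fin.ext h)
          have hiff : ((i : ℕ) < k + 1) ↔ ((i : ℕ) < k) := by omega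
          simp only [hCk, hCk1, Function.update_of_ne hik, hiff]
      have step : ∀ g : Fin n → X,
          f (Ck g) = lpolar R (rpolar R
            (⋃ x ∈ A k', f (Ck1 (Function.update g k' x)))) := by
        intro g
        have h𝒞 : ∀ B ∈ bk '' (A k'), StableX R B := by
          rintro B ⟨x, -, rfl⟩
          exact stable_lp R _
        have h0 := hf_complete k' (Ck g) (hCkstab g) (bk '' (A k')) h𝒞
        have h1 : lpolar R (rpolar R (⋃₀ (bk '' (A k')))) = A k' := by
          have hr : rpolar R (⋃₀ (bk '' (A k'))) = rpolar R (A k') := by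
            apply Set.Subset.antisymm
            · intro y hy x hx
              exact hy x ⟨bk x, ⟨x, hx, rfl⟩, subset_lrp R {x} rfl⟩
            · rintro y hy x ⟨B, ⟨w, hw, rfl⟩, hxB⟩
              refine hxB y (fun z hz => ?_)
              rw [Set.mem_singleton_iff] at hz
              rw [hz]
              exact hy w hw
          rw [hr]
          exact (hA k').symm
        have h2 : Function.update (Ck g) k' (A k') = Ck g := by
          funext i
          by_cases hik : i = k'
          · subst hik
            simp [hCk]
            exact fun h => absurd h (lt_irrefl _)
          · rw [Function.update_of_ne hik]
        rw [h1, h2] at h0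
        have h3 : (⋃ x ∈ A k', f (Function.update (Ck g) k' (bk x))) =
            ⋃ x ∈ A k', f (Ck1 (Function.update g k' x)) :=
          Set.iUnion₂_congr fun x _ => by rw [upd_eq]
        rw [h0, Set.biUnion_image, h3]
      have hr : rpolar R (⋃ g : {g : Fin n → X // ∀ i, g i ∈ A i}, f (Ck g.1)) =
          rpolar R (⋃ g : {g : Fin n → X // ∀ i, g i ∈ A i}, f (Ck1 g.1)) := by
        ext y
        rw [mem_rp_iUnion, mem_rp_iUnion]
        constructor
        · intro h g
          have h1 := h g
          rw [step g.1, rp_lrp, mem_rp_biUnion] at h1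
          have h2 := h1 (g.1 k') (g.2 k')
          rwa [Function.update_eq_self] at h2
        · intro h g
          rw [step g.1, rp_lrp, mem_rp_biUnion]
          intro x hx
          have hval : ∀ i, Function.update g.1 k' x i ∈ A i := by
            intro i
            by_cases hik : i = k'
            · subst hik; simpa using hx
            · rw [Function.update_of_ne hik]; exact g.2 i
          exact h ⟨Function.update g.1 k' x, hval⟩
      rw [ih']
      exact congrArg (lpolar R) hr
  have hfin := key n le_rfl
  have hsimp : ∀ g : Fin n → X,
      (fun i : Fin n => if (i : ℕ) < n then bk (g i) else A i) =
        fun i : Fin n => bk (g i) :=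
    fun g => funext fun i => if_pos i.isLt
  rw [hfin]
  unfold fS
  apply congrArg (lpolar R)
  ext y
  rw [mem_rp_iUnion]
  constructor
  · intro h xs hxs
    have := h ⟨xs, hxs⟩
    rwa [hsimp] at this
  · intro h g
    rw [hsimp]
    exact h g.1 g.2
end

section
/- Let P = (X, Y, R) be a polarity and T ⊆ X × Yᵐ a relation all of whose sections are stable. Then g_T maps m-tuples of stable subsets of X to stable subsets of X and is a complete normal dual operator on P⁺: for each coordinate i < m, every m-tuple A⃗ of stable sets and every (possibly empty) family {B_j}_{j∈J} of stable sets, g_T(A⃗[⋂_J B_j / i]) = ⋂_J g_T(A⃗[B_j / i]), where the empty intersection is X and A⃗[B/i] replaces the i-th entry of A⃗ by B. -/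
lemma aux_rpolar_anti {X Y : Type*} (R : X → Y → Prop) {A A' : Set X} (h : A ⊆ A') :
    rpolar R A' ⊆ rpolar R A := fun _ hy x hx => hy x (h hx)

lemma aux_lpolar_anti {X Y : Type*} (R : X → Y → Prop) {B B' : Set Y} (h : B ⊆ B') :
    lpolar R B' ⊆ lpolar R B := fun _ hx y hy => hx y (h hy)

lemma aux_subset_lr {X Y : Type*} (R : X → Y → Prop) (A : Set X) :
    A ⊆ lpolar R (rpolar R A) := fun _ hx _ hy => hy _ hx

/-- If all sections of `T ⊆ X × Yᵐ` are stable, then `g_T` maps tuples of stable sets to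
stable sets and is a complete normal dual operator on the stable set lattice: it preserves
arbitrary (including empty) intersections in each coordinate. -/
theorem stmt3 {X Y : Type*} {m : ℕ} (R : X → Y → Prop)
    (T : X → (Fin m → Y) → Prop) (hT : TSectionsStable R T) :
    (∀ A : Fin m → Set X, (∀ i, StableX R (A i)) → StableX R (gT R T A)) ∧
    (∀ (i : Fin m) (A : Fin m → Set X), (∀ j, StableX R (A j)) →
      ∀ 𝒞 : Set (Set X), (∀ B ∈ 𝒞, StableX R B) →
        gT R T (Function.update A i (⋂₀ 𝒞)) = ⋂ B ∈ 𝒞, gT R T (Function.update A i B)) := by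
  constructor
  · intro A _hA
    refine Set.Subset.antisymm (aux_subset_lr R _) ?_
    intro x hx ys hys
    have hsub : gT R T A ⊆ {x' | T x' ys} := fun x' hx' => hx' ys hys
    have h2 : lpolar R (rpolar R (gT R T A)) ⊆ lpolar R (rpolar R {x' | T x' ys}) :=
      aux_lpolar_anti R (aux_rpolar_anti R hsub)
    have h3 := h2 hx
    rwa [← hT.1 ys] at h3
  · intro i A _hA 𝒞 h𝒞
    ext x
    simp only [Set.mem_iInter]
    constructor
    · intro hx B hB ys hys
      apply hx ys
      intro j
      by_cases hj : j = i
      · subst hj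
        have h := hys j
        rw [Function.update_self] at h ⊢
        exact aux_rpolar_anti R (Set.sInter_subset_of_mem hB) h
      · have h := hys j
        rwa [Function.update_of_ne hj] at h ⊢
    · intro hx ys hys
      set C : Set Y := {y' | T x (Function.update ys i y')} with hC
      have hUC : ∀ B ∈ 𝒞, rpolar R B ⊆ C := by
        intro B hB y' hy'
        apply hx B hB (Function.update ys i y')
        intro j
        by_cases hj : j = i
        · subst hj
          rw [Function.update_self, Function.update_self]
          exact hy'
        · rw [Function.update_of_ne hj, Function.update_of_ne hj]
          have h := hys j
          rwa [Function.update_of_ne hj] at h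
      have hlC : lpolar R C ⊆ ⋂₀ 𝒞 := by
        intro x' hx' B hB
        rw [h𝒞 B hB]
        intro y hy
        exact hx' y (hUC B hB hy)
      have hyi : ys i ∈ rpolar R (⋂₀ 𝒞) := by
        have h := hys i
        rwa [Function.update_self] at h
      have hyiC : ys i ∈ C := by
        have h := aux_rpolar_anti R hlC hyi
        rw [hC, hT.2 x ys i]
        exact h
      have : T x (Function.update ys i (ys i)) := hyiC
      rwa [Function.update_eq_self] at this
end

section
/- Let (X, Y, R) and (X′, Y′, R′) be polarities and let α : X → X′, β : Y → Y′ be a bounded morphism of polarities. Then for all A ⊆ X′ and B ⊆ Y′: (1) β⁻¹(ρ_{R′} A) ⊆ ρ_R(α⁻¹ A), with equality when A is a ≤₁′-upset; (2) α⁻¹(λ_{R′} B) ⊆ λ_R(β⁻¹ B), with equality when B is a ≤₂′-upset; (3) if A is stable in (X′, Y′, R′), then α⁻¹ A is stable in (X, Y, R). -/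
/-- A bounded morphism between plain polarities. -/
structure IsPolarityMorphism {X Y X' Y' : Type*} (R : X → Y → Prop) (R' : X' → Y' → Prop)
    (α : X → X') (β : Y → Y') : Prop where
  mono1 : ∀ ⦃x z : X⦄, le1 R x z → le1 R' (α x) (α z)
  mono2 : ∀ ⦃y w : Y⦄, le2 R y w → le2 R' (β y) (β w)
  backR : ∀ ⦃x : X⦄ ⦃y : Y⦄, R' (α x) (β y) → R x y
  forthR1 : ∀ ⦃x' : X'⦄ ⦃y : Y⦄, (∀ x : X, le1 R' x' (α x) → R x y) → R' x' (β y)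
  forthR2 : ∀ ⦃x : X⦄ ⦃y' : Y'⦄, (∀ y : Y, le2 R' y' (β y) → R x y) → R' (α x) y'

/-- A bounded morphism between Ω-polarities. -/
structure IsBddMorphism {X Y X' Y' : Type*} {n m : ℕ}
    (R : X → Y → Prop) (S : (Fin n → X) → Y → Prop) (T : X → (Fin m → Y) → Prop)
    (R' : X' → Y' → Prop) (S' : (Fin n → X') → Y' → Prop) (T' : X' → (Fin m → Y') → Prop)
    (α : X → X') (β : Y → Y') : Prop where
  mono1 : ∀ ⦃x z : X⦄, le1 R x z → le1 R' (α x) (α z)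
  mono2 : ∀ ⦃y w : Y⦄, le2 R y w → le2 R' (β y) (β w)
  backR : ∀ ⦃x : X⦄ ⦃y : Y⦄, R' (α x) (β y) → R x y
  forthR1 : ∀ ⦃x' : X'⦄ ⦃y : Y⦄, (∀ x : X, le1 R' x' (α x) → R x y) → R' x' (β y)
  forthR2 : ∀ ⦃x : X⦄ ⦃y' : Y'⦄, (∀ y : Y, le2 R' y' (β y) → R x y) → R' (α x) y'
  backS : ∀ ⦃xs : Fin n → X⦄ ⦃y : Y⦄, S' (fun i => α (xs i)) (β y) → S xs y
  forthS : ∀ ⦃xs' : Fin n → X'⦄ ⦃y : Y⦄,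
    (∀ xs : Fin n → X, (∀ i, le1 R' (xs' i) (α (xs i))) → S xs y) → S' xs' (β y)
  backT : ∀ ⦃x : X⦄ ⦃ys : Fin m → Y⦄, T' (α x) (fun i => β (ys i)) → T x ys
  forthT : ∀ ⦃x : X⦄ ⦃ys' : Fin m → Y'⦄,
    (∀ ys : Fin m → Y, (∀ i, le2 R' (ys' i) (β (ys i))) → T x ys) → T' (α x) ys'

/-- Lemma on bounded morphisms of polarities: behaviour of `ρ` and `λ` under preimages,
with equality on upsets, and preimages of stable sets are stable. -/
theorem stmt5 {X Y X' Y' : Type*} (R : X → Y → Prop) (R' : X' → Y' → Prop)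
    (α : X → X') (β : Y → Y') (h : IsPolarityMorphism R R' α β) :
    (∀ A : Set X', β ⁻¹' (rpolar R' A) ⊆ rpolar R (α ⁻¹' A)) ∧
    (∀ A : Set X', (∀ x ∈ A, ∀ z : X', le1 R' x z → z ∈ A) →
      β ⁻¹' (rpolar R' A) = rpolar R (α ⁻¹' A)) ∧
    (∀ B : Set Y', α ⁻¹' (lpolar R' B) ⊆ lpolar R (β ⁻¹' B)) ∧
    (∀ B : Set Y', (∀ y ∈ B, ∀ w : Y', le2 R' y w → w ∈ B) →
      α ⁻¹' (lpolar R' B) = lpolar R (β ⁻¹' B)) ∧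
    (∀ A : Set X', StableX R' A → StableX R (α ⁻¹' A)) := by
  have sub1 : ∀ A : Set X', β ⁻¹' (rpolar R' A) ⊆ rpolar R (α ⁻¹' A) := by
    intro A y hy x hx
    exact h.backR (hy (α x) hx)
  have sub3 : ∀ B : Set Y', α ⁻¹' (lpolar R' B) ⊆ lpolar R (β ⁻¹' B) := by
    intro B x hx y hy
    exact h.backR (hx (β y) hy)
  refine ⟨sub1, ?_, sub3, ?_, ?_⟩
  · intro A hA
    apply Set.Subset.antisymm (sub1 A)
    intro y hy x' hx'
    exact h.forthR1 (fun x hle => hy x (hA x' hx' (α x) hle))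
  · intro B hB
    apply Set.Subset.antisymm (sub3 B)
    intro x hx y' hy'
    exact h.forthR2 (fun y hle => hx y (hB y' hy' (β y) hle))
  · intro A hA
    apply Set.Subset.antisymm
    · intro x hx y hy
      exact hy x hx
    · intro x hx
      show α x ∈ A
      rw [hA]
      intro y' hy'
      refine h.forthR2 (fun y hle => hx y (sub1 A ?_))
      intro z hz
      exact hle (fun w hw => by rw [Set.mem_singleton_iff] at hw; subst hw; exact hy' z hz) (β y) rfl
end

section
/- Let (X, Y, R) and (X′, Y′, R′) be polarities and α : X → X′, β : Y → Y′ any pair of functions. Then: (1) α, β satisfy conditions (1_R) and (2_R) if and only if β⁻¹(ρ_{R′} A) = ρ_R(α⁻¹ A) for every stable A ⊆ X′; (2) α, β satisfy conditions (1_R) and (3_R) if and only if α⁻¹(λ_{R′} B) = λ_R(β⁻¹ B) for every stable B ⊆ Y′. -/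

lemma lpolar_stableX {X Y : Type*} (R : X → Y → Prop) (B : Set Y) :
    StableX R (lpolar R B) := by
  apply Set.Subset.antisymm
  · intro x hx y hy
    exact hy x hx
  · intro x hx y hy
    exact hx y (fun x' hx' => hx' y hy)

lemma rpolar_stableY {X Y : Type*} (R : X → Y → Prop) (A : Set X) :
    StableY R (rpolar R A) := by
  apply Set.Subset.antisymm
  · intro y hy x hx
    exact hx y hy
  · intro y hy x hx
    exact hy x (fun y' hy' => hy' x hx)

/-- Characterisation of the back-and-forth conditions (1_R), (2_R), (3_R) in terms of
commutation of preimages with the polar operations on stable sets. -/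
theorem stmt6 {X Y X' Y' : Type*} (R : X → Y → Prop) (R' : X' → Y' → Prop)
    (α : X → X') (β : Y → Y') :
    (((∀ (x : X) (y : Y), R' (α x) (β y) → R x y) ∧
      (∀ (x' : X') (y : Y), (∀ x : X, le1 R' x' (α x) → R x y) → R' x' (β y))) ↔
      (∀ A : Set X', StableX R' A → β ⁻¹' (rpolar R' A) = rpolar R (α ⁻¹' A))) ∧
    (((∀ (x : X) (y : Y), R' (α x) (β y) → R x y) ∧
      (∀ (x : X) (y' : Y'), (∀ y : Y, le2 R' y' (β y) → R x y) → R' (α x) y')) ↔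
      (∀ B : Set Y', StableY R' B → α ⁻¹' (lpolar R' B) = lpolar R (β ⁻¹' B))) := by
  constructor
  · constructor
    · rintro ⟨h1, h2⟩ A hA
      apply Set.Subset.antisymm
      · intro y hy x hx
        exact h1 x y (hy (α x) hx)
      · intro y hy x' hx'
        apply h2 x' y
        intro x hle
        apply hy
        show α x ∈ A
        rw [hA]
        intro y' hy'
        refine hle ?_ (α x) rfl
        intro x2 hx2
        rw [show x2 = x' from hx2]
        exact hy' x' hx'
    · intro h
      constructor
      · intro x y hR'
        have hs := h (lpolar R' (rpolar R' {α x})) (lpolar_stableX R' _)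
        have hy : y ∈ β ⁻¹' (rpolar R' (lpolar R' (rpolar R' {α x}))) := by
          intro x2 hx2
          apply hx2 (β y)
          intro x3 hx3
          rw [show x3 = α x from hx3]
          exact hR'
        rw [hs] at hy
        exact hy x (fun y' hy' => hy' (α x) rfl)
      · intro x' y hy
        have hs := h (lpolar R' (rpolar R' {x'})) (lpolar_stableX R' _)
        have hy2 : y ∈ rpolar R (α ⁻¹' (lpolar R' (rpolar R' {x'}))) := by
          intro x hx
          apply hy x
          intro y' hy' x2 hx2
          rw [show x2 = α x from hx2]
          exact hx y' hy'
        rw [← hs] at hy2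
        exact hy2 x' (fun y' hy' => hy' x' rfl)
  · constructor
    · rintro ⟨h1, h3⟩ B hB
      apply Set.Subset.antisymm
      · intro x hx y hy
        exact h1 x y (hx (β y) hy)
      · intro x hx y' hy'
        apply h3 x y'
        intro y hle
        apply hx
        show β y ∈ B
        rw [hB]
        intro x' hx'
        refine hle ?_ (β y) rfl
        intro y2 hy2
        rw [show y2 = y' from hy2]
        exact hx' y' hy'
    · intro h
      constructor
      · intro x y hR'
        have hs := h (rpolar R' (lpolar R' {β y})) (rpolar_stableY R' _)
        have hx : x ∈ α ⁻¹' (lpolar R' (rpolar R' (lpolar R' {β y}))) := by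
          intro y2 hy2
          apply hy2 (α x)
          intro y3 hy3
          rw [show y3 = β y from hy3]
          exact hR'
        rw [hs] at hx
        exact hx y (fun x2 hx2 => hx2 (β y) rfl)
      · intro x y' hy
        have hs := h (rpolar R' (lpolar R' {y'})) (rpolar_stableY R' _)
        have hx2 : x ∈ lpolar R (β ⁻¹' (rpolar R' (lpolar R' {y'}))) := by
          intro y hy2
          apply hy y
          intro x2 hxx y3 hy3
          rw [show y3 = β y from hy3]
          exact hy2 x2 hxx
        rw [← hs] at hx2
        exact hx2 y' (fun x2 hxx => hxx y' rfl)
end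

section
/- For any bounded morphism (α, β) between Ω-polarities P = (X, Y, R, S, T) and P′ = (X′, Y′, R′, S′, T′), the following are equivalent: (1) (α, β) preserves polarity, i.e. x R y implies α(x) R′ β(y); (2) α reflects quasi-order, i.e. α(x) ≤₁′ α(z) implies x ≤₁ z; (3) β reflects quasi-order, i.e. β(y) ≤₂′ β(w) implies y ≤₂ w. -/
lemma le1_iff {X Y : Type*} (R : X → Y → Prop) (a b : X) :
    le1 R a b ↔ ∀ y, R a y → R b y := by
  simp [le1, rpolar, Set.subset_def]

lemma le2_iff {X Y : Type*} (R : X → Y → Prop) (a b : Y) :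
    le2 R a b ↔ ∀ x, R x a → R x b := by
  simp [le2, lpolar, Set.subset_def]

/-- For a bounded morphism of Ω-polarities, preserving the polarity relation `R`,
reflecting the quasi-order by `α`, and reflecting the quasi-order by `β` are all
equivalent. -/
theorem stmt9 {X Y X' Y' : Type*} {n m : ℕ}
    (R : X → Y → Prop) (S : (Fin n → X) → Y → Prop) (T : X → (Fin m → Y) → Prop)
    (hS : SSectionsStable R S) (hT : TSectionsStable R T)
    (R' : X' → Y' → Prop) (S' : (Fin n → X') → Y' → Prop) (T' : X' → (Fin m → Y') → Prop)
    (hS' : SSectionsStable R' S') (hT' : TSectionsStable R' T')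
    (α : X → X') (β : Y → Y') (h : IsBddMorphism R S T R' S' T' α β) :
    ((∀ (x : X) (y : Y), R x y → R' (α x) (β y)) ↔
      (∀ x z : X, le1 R' (α x) (α z) → le1 R x z)) ∧
    ((∀ (x : X) (y : Y), R x y → R' (α x) (β y)) ↔
      (∀ y w : Y, le2 R' (β y) (β w) → le2 R y w)) := by
  constructor
  · constructor
    · intro h1 x z hle
      rw [le1_iff R' (α x) (α z)] at hle
      rw [le1_iff]
      intro y hxy
      exact h.backR (hle (β y) (h1 x y hxy))
    · intro h2 x y hxy
      refine h.forthR1 (fun x0 hle => ?_)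
      have := h2 x x0 hle
      rw [le1_iff] at this
      exact this y hxy
  · constructor
    · intro h1 y w hle
      rw [le2_iff R' (β y) (β w)] at hle
      rw [le2_iff]
      intro x hxy
      exact h.backR (hle (α x) (h1 x y hxy))
    · intro h3 x y hxy
      refine h.forthR2 (fun w hle => ?_)
      have := h3 y w hle
      rw [le2_iff] at this
      exact this x hxy
end

section
/- A bounded morphism (α, β) : P → P′ between Ω-polarities is an isomorphism — i.e. there exists a bounded morphism (α′, β′) : P′ → P with α′ ∘ α = id_X, β′ ∘ β = id_Y, α ∘ α′ = id_{X′} and β ∘ β′ = id_{Y′} — if and only if α and β are bijective and (α, β) preserves the relations R, S and T, i.e. x R y implies α(x) R′ β(y), x⃗ S y implies α(x⃗) S′ β(y), and x T y⃗ implies α(x) T′ β(y⃗). -/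
lemma le1_refl {X Y : Type*} (R : X → Y → Prop) (a : X) : le1 R a a :=
  (le1_iff R a a).mpr fun _ h => h

lemma le2_refl {X Y : Type*} (R : X → Y → Prop) (a : Y) : le2 R a a :=
  (le2_iff R a a).mpr fun _ h => h

/-- A bounded morphism `(α, β)` of Ω-polarities is an isomorphism (has a two-sided inverse
bounded morphism) iff `α` and `β` are bijective and `(α, β)` preserves `R`, `S` and `T`. -/
theorem stmt10 {X Y X' Y' : Type*} {n m : ℕ}
    (R : X → Y → Prop) (S : (Fin n → X) → Y → Prop) (T : X → (Fin m → Y) → Prop)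
    (hS : SSectionsStable R S) (hT : TSectionsStable R T)
    (R' : X' → Y' → Prop) (S' : (Fin n → X') → Y' → Prop) (T' : X' → (Fin m → Y') → Prop)
    (hS' : SSectionsStable R' S') (hT' : TSectionsStable R' T')
    (α : X → X') (β : Y → Y') (h : IsBddMorphism R S T R' S' T' α β) :
    (∃ (α' : X' → X) (β' : Y' → Y),
      IsBddMorphism R' S' T' R S T α' β' ∧
      α' ∘ α = id ∧ β' ∘ β = id ∧ α ∘ α' = id ∧ β ∘ β' = id) ↔
    (Function.Bijective α ∧ Function.Bijective β ∧
      (∀ (x : X) (y : Y), R x y → R' (α x) (β y)) ∧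
      (∀ (xs : Fin n → X) (y : Y), S xs y → S' (fun i => α (xs i)) (β y)) ∧
      (∀ (x : X) (ys : Fin m → Y), T x ys → T' (α x) (fun i => β (ys i)))) := by
  constructor
  · rintro ⟨α', β', h', hαα', hββ', hα'α, hβ'β⟩
    have lα : Function.LeftInverse α' α := congrFun hαα'
    have rα : Function.RightInverse α' α := congrFun hα'α
    have lβ : Function.LeftInverse β' β := congrFun hββ'
    have rβ : Function.RightInverse β' β := congrFun hβ'β
    refine ⟨⟨lα.injective, rα.surjective⟩, ⟨lβ.injective, rβ.surjective⟩, ?_, ?_, ?_⟩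
    · intro x y hxy
      exact h'.backR (by rw [lα x, lβ y]; exact hxy)
    · intro xs y hxy
      apply h'.backS
      have : (fun i => α' (α (xs i))) = xs := funext fun i => lα _
      rw [this, lβ y]; exact hxy
    · intro x ys hxy
      apply h'.backT
      have : (fun i => β' (β (ys i))) = ys := funext fun i => lβ _
      rw [this, lα x]; exact hxy
  · rintro ⟨hα, hβ, pR, pS, pT⟩
    obtain ⟨α', lα, rα⟩ := Function.bijective_iff_has_inverse.mp hα
    obtain ⟨β', lβ, rβ⟩ := Function.bijective_iff_has_inverse.mp hβ
    have ER : ∀ x' y', R' x' y' ↔ R (α' x') (β' y') := fun x' y' =>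
      ⟨fun h1 => h.backR (by rw [rα, rβ]; exact h1),
       fun h1 => by have := pR _ _ h1; rwa [rα, rβ] at this⟩
    have ES : ∀ (xs' : Fin n → X') (y' : Y'),
        S' xs' y' ↔ S (fun i => α' (xs' i)) (β' y') := by
      intro xs' y'
      constructor
      · intro h1
        apply h.backS
        have : (fun i => α (α' (xs' i))) = xs' := funext fun i => rα _
        rw [this, rβ]; exact h1
      · intro h1
        have := pS _ _ h1
        have e : (fun i => α (α' (xs' i))) = xs' := funext fun i => rα _
        rwa [e, rβ] at this
    have ET : ∀ (x' : X') (ys' : Fin m → Y'),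
        T' x' ys' ↔ T (α' x') (fun i => β' (ys' i)) := by
      intro x' ys'
      constructor
      · intro h1
        apply h.backT
        have : (fun i => β (β' (ys' i))) = ys' := funext fun i => rβ _
        rw [this, rα]; exact h1
      · intro h1
        have := pT _ _ h1
        have e : (fun i => β (β' (ys' i))) = ys' := funext fun i => rβ _
        rwa [e, rα] at this
    have E1 : ∀ x' z', le1 R' x' z' ↔ le1 R (α' x') (α' z') := by
      intro x' z'
      rw [le1_iff, le1_iff]
      constructor
      · intro hle y hy
        have h1 : R' x' (β y) := by rw [ER]; rw [lβ]; exact hy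
        have h2 := hle _ h1
        rw [ER, lβ] at h2; exact h2
      · intro hle y' hy'
        rw [ER] at hy' ⊢
        exact hle _ hy'
    have E2 : ∀ y' w', le2 R' y' w' ↔ le2 R (β' y') (β' w') := by
      intro y' w'
      rw [le2_iff, le2_iff]
      constructor
      · intro hle x hx
        have h1 : R' (α x) y' := by rw [ER, lα]; exact hx
        have h2 := hle _ h1
        rw [ER, lα] at h2; exact h2
      · intro hle x' hx'
        rw [ER] at hx' ⊢
        exact hle _ hx'
    have lαe : ∀ x, α' (α x) = x := lα
    have rαe : ∀ x', α (α' x') = x' := rα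
    have lβe : ∀ y, β' (β y) = y := lβ
    have rβe : ∀ y', β (β' y') = y' := rβ
    refine ⟨α', β', ?_, funext lα, funext lβ, funext rα, funext rβ⟩
    constructor
    · intro x z hxz; exact (E1 x z).mp hxz
    · intro y w hyw; exact (E2 y w).mp hyw
    · intro x' y' h1; rw [ER]
      have := pR _ _ h1; rwa [rαe, rβe] at this
    · intro x y' h1
      have h2 := h1 (α x) (by rw [lαe]; exact le1_refl R _)
      rw [ER, lαe] at h2; exact h2
    · intro x' y h1
      have h2 := h1 (β y) (by rw [lβe]; exact le2_refl R _)
      rw [ER, lβe] at h2; exact h2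
    · intro xs' y' h1; exact (ES _ _).mpr h1
    · intro xs y' h1
      have h2 := h1 (fun i => α (xs i)) (fun i => by
        show le1 R (xs i) (α' (α (xs i)))
        rw [lαe]; exact le1_refl R _)
      have h3 := (ES _ _).mp h2
      simpa [lαe] using h3
    · intro x' ys' h1; exact (ET _ _).mpr h1
    · intro x ys' h1
      have h2 := h1 (fun i => β (ys' i)) (fun i => by
        show le2 R (ys' i) (β' (β (ys' i)))
        rw [lβe]; exact le2_refl R _)
      have h3 := (ET _ _).mp h2
      simpa [lβe] using h3
end

section
/- Let L be a bounded lattice and (𝓕_L, 𝓘_L, ⋔) its canonical polarity. For the quasi-orders ≤₁ and ≤₂ defined from ⋔ (F ≤₁ F′ iff every ideal D with F ⋔ D has F′ ⋔ D; D ≤₂ D′ iff every filter F with F ⋔ D has F ⋔ D′), one has: for all F, F′ ∈ 𝓕_L, F ≤₁ F′ if and only if F ⊆ F′; and for all D, D′ ∈ 𝓘_L, D ≤₂ D′ if and only if D ⊆ D′. -/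
/-- A nonempty lattice filter: nonempty, upward closed, closed under binary meets. -/
def IsLatFilter {L : Type*} [Lattice L] (F : Set L) : Prop :=
  F.Nonempty ∧ (∀ ⦃a b : L⦄, a ∈ F → a ≤ b → b ∈ F) ∧ (∀ ⦃a b : L⦄, a ∈ F → b ∈ F → a ⊓ b ∈ F)

/-- A nonempty lattice ideal: nonempty, downward closed, closed under binary joins. -/
def IsLatIdeal {L : Type*} [Lattice L] (D : Set L) : Prop :=
  D.Nonempty ∧ (∀ ⦃a b : L⦄, a ∈ D → b ≤ a → b ∈ D) ∧ (∀ ⦃a b : L⦄, a ∈ D → b ∈ D → a ⊔ b ∈ D)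

/-- The set `𝓕_L` of nonempty filters of `L`. -/
abbrev Filt (L : Type*) [Lattice L] := {F : Set L // IsLatFilter F}

/-- The set `𝓘_L` of nonempty ideals of `L`. -/
abbrev Idl (L : Type*) [Lattice L] := {D : Set L // IsLatIdeal D}

/-- The canonical polarity relation: `F ⋔ D` iff `F ∩ D ≠ ∅`. -/
def canR {L : Type*} [Lattice L] (F : Filt L) (D : Idl L) : Prop := (F.val ∩ D.val).Nonempty

/-- In the canonical polarity `(𝓕_L, 𝓘_L, ⋔)` of a bounded lattice `L`, the quasi-orders
`≤₁` and `≤₂` coincide with set inclusion of filters and of ideals respectively. -/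
theorem stmt14 {L : Type*} [Lattice L] [BoundedOrder L] :
    (∀ F F' : Filt L, le1 (canR (L := L)) F F' ↔ F.val ⊆ F'.val) ∧
    (∀ D D' : Idl L, le2 (canR (L := L)) D D' ↔ D.val ⊆ D'.val) := by
  constructor
  · intro F F'
    constructor
    · intro h a haF
      have hD : IsLatIdeal {b : L | b ≤ a} :=
        ⟨⟨a, le_rfl⟩, fun x y hx hy => le_trans hy hx, fun x y hx hy => sup_le hx hy⟩
      have hmem : (⟨{b : L | b ≤ a}, hD⟩ : Idl L) ∈ rpolar (canR (L := L)) {F} := by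
        intro x hx
        rw [Set.mem_singleton_iff] at hx
        subst hx
        exact ⟨a, haF, le_rfl⟩
      have := h hmem F' rfl
      obtain ⟨b, hbF', hba⟩ := this
      exact F'.prop.2.1 hbF' hba
    · intro hsub D hD F'' hF''
      rw [Set.mem_singleton_iff] at hF''; subst hF''
      obtain ⟨x, hxF, hxD⟩ := hD F rfl
      exact ⟨x, hsub hxF, hxD⟩
  · intro D D'
    constructor
    · intro h a haD
      have hF : IsLatFilter {b : L | a ≤ b} :=
        ⟨⟨a, le_rfl⟩, fun x y hx hy => le_trans hx hy, fun x y hx hy => le_inf hx hy⟩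
      have hmem : (⟨{b : L | a ≤ b}, hF⟩ : Filt L) ∈ lpolar (canR (L := L)) {D} := by
        intro y hy
        rw [Set.mem_singleton_iff] at hy
        subst hy
        exact ⟨a, le_rfl, haD⟩
      have := h hmem D' rfl
      obtain ⟨b, hab, hbD'⟩ := this
      exact D'.prop.2.1 hbD' hab
    · intro hsub F hF D'' hD''
      rw [Set.mem_singleton_iff] at hD''; subst hD''
      obtain ⟨x, hxF, hxD⟩ := hF D rfl
      exact ⟨x, hxF, hsub hxD⟩
end

section
/- Let L be a bounded lattice, f : Lⁿ → L a normal operator and g : Lᵐ → L a normal dual operator. Then in the canonical polarity (𝓕_L, 𝓘_L, ⋔), all sections of the relation S_L and all sections of the relation T_L are stable; hence the canonical structure L₊ = (𝓕_L, 𝓘_L, ⋔, S_L, T_L) is an Ω-polarity. -/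
/-- The canonical relation `S_L` on filters/ideals determined by an operator `f`. -/
def SL {L : Type*} [Lattice L] {n : ℕ} (f : (Fin n → L) → L) :
    (Fin n → Filt L) → Idl L → Prop :=
  fun Fs D => ∃ a : Fin n → L, (∀ i, a i ∈ (Fs i).val) ∧ f a ∈ D.val

/-- The canonical relation `T_L` on filters/ideals determined by a dual operator `g`. -/
def TL {L : Type*} [Lattice L] {m : ℕ} (g : (Fin m → L) → L) :
    Filt L → (Fin m → Idl L) → Prop :=
  fun F Ds => ∃ a : Fin m → L, (∀ i, a i ∈ (Ds i).val) ∧ g a ∈ F.val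


namespace Helper15

variable {X Y : Type*} {R : X → Y → Prop}

lemma subset_lr (A : Set X) : A ⊆ lpolar R (rpolar R A) := fun x hx y hy => hy x hx
lemma subset_rl (B : Set Y) : B ⊆ rpolar R (lpolar R B) := fun y hy x hx => hx y hy
lemma lpolar_anti {B B' : Set Y} (h : B ⊆ B') : lpolar R B' ⊆ lpolar R B :=
  fun x hx y hy => hx y (h hy)
lemma rpolar_anti {A A' : Set X} (h : A ⊆ A') : rpolar R A' ⊆ rpolar R A :=
  fun y hy x hx => hy x (h hx)

lemma stableX_lpolar (B : Set Y) : StableX R (lpolar R B) :=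
  Set.Subset.antisymm (subset_lr _) (lpolar_anti (subset_rl B))
lemma stableY_rpolar (A : Set X) : StableY R (rpolar R A) :=
  Set.Subset.antisymm (subset_rl _) (rpolar_anti (subset_lr A))

lemma stableX_of_eq {A : Set X} (y : Y) (h : A = {x | R x y}) : StableX R A := by
  have h2 : A = lpolar R {y} := by ext x; simp [h, lpolar]
  rw [h2]; exact stableX_lpolar _
lemma stableY_of_eq {B : Set Y} (x : X) (h : B = {y | R x y}) : StableY R B := by
  have h2 : B = rpolar R {x} := by ext y; simp [h, rpolar]
  rw [h2]; exact stableY_rpolar _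

lemma coordMono {L : Type*} [Lattice L] {n : ℕ} (h : (Fin n → L) → L)
    (hm : ∀ (i : Fin n) (x : Fin n → L) (b c : L), b ≤ c →
      h (Function.update x i b) ≤ h (Function.update x i c))
    {a b : Fin n → L} (hab : ∀ i, a i ≤ b i) : h a ≤ h b := by
  classical
  have key : ∀ s : Finset (Fin n), h a ≤ h (s.piecewise b a) := by
    intro s
    induction s using Finset.induction_on with
    | empty => simp [Finset.piecewise_empty]
    | @insert j s hj ih =>
      rw [Finset.piecewise_insert]
      have h1 : (s.piecewise b a) j = a j := Finset.piecewise_eq_of_notMem _ _ _ hj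
      calc h a ≤ h (s.piecewise b a) := ih
        _ = h (Function.update (s.piecewise b a) j (a j)) := by
              rw [← h1, Function.update_eq_self]
        _ ≤ _ := hm j _ _ _ (hab j)
  have := key Finset.univ
  rwa [Finset.piecewise_univ] at this

lemma update_le_update {L : Type*} [Lattice L] {k : ℕ} {a b : Fin k → L} {i : Fin k}
    {x y : L} (h : ∀ j, j ≠ i → a j ≤ b j) (hxy : x ≤ y) :
    ∀ j, Function.update a i x j ≤ Function.update b i y j := by
  intro j
  rcases eq_or_ne j i with rfl | hj
  · simpa using hxy
  · simpa [Function.update_of_ne hj] using h j hj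

end Helper15

/-- For a normal operator `f` and normal dual operator `g` on a bounded lattice `L`,
all sections of the canonical relations `S_L` and `T_L` are stable in the canonical
polarity `(𝓕_L, 𝓘_L, ⋔)`; hence the canonical structure `L₊` is an Ω-polarity. -/
theorem stmt15 {L : Type*} [Lattice L] [BoundedOrder L] {n m : ℕ}
    (f : (Fin n → L) → L)
    (hf_join : ∀ (i : Fin n) (a : Fin n → L) (b c : L),
      f (Function.update a i (b ⊔ c)) = f (Function.update a i b) ⊔ f (Function.update a i c))
    (hf_bot : ∀ (i : Fin n) (a : Fin n → L), f (Function.update a i ⊥) = ⊥)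
    (g : (Fin m → L) → L)
    (hg_meet : ∀ (i : Fin m) (a : Fin m → L) (b c : L),
      g (Function.update a i (b ⊓ c)) = g (Function.update a i b) ⊓ g (Function.update a i c))
    (hg_top : ∀ (i : Fin m) (a : Fin m → L), g (Function.update a i ⊤) = ⊤) :
    SSectionsStable (canR (L := L)) (SL f) ∧ TSectionsStable (canR (L := L)) (TL g) :=  by
  classical
  open Helper15 in
  -- monotonicity of f and g
  have fmono : ∀ {a b : Fin n → L}, (∀ i, a i ≤ b i) → f a ≤ f b := by
    intro a b hab
    refine Helper15.coordMono f (fun i x p q hpq => ?_) hab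
    have hq : p ⊔ q = q := sup_eq_right.2 hpq
    calc f (Function.update x i p)
        ≤ f (Function.update x i p) ⊔ f (Function.update x i q) := le_sup_left
      _ = f (Function.update x i (p ⊔ q)) := (hf_join i x p q).symm
      _ = f (Function.update x i q) := by rw [hq]
  have gmono : ∀ {a b : Fin m → L}, (∀ i, a i ≤ b i) → g a ≤ g b := by
    intro a b hab
    refine Helper15.coordMono g (fun i x p q hpq => ?_) hab
    have hq : p ⊓ q = p := inf_eq_left.2 hpq
    calc g (Function.update x i p)
        = g (Function.update x i (p ⊓ q)) := by rw [hq]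
      _ = g (Function.update x i p) ⊓ g (Function.update x i q) := hg_meet i x p q
      _ ≤ g (Function.update x i q) := inf_le_right
  refine ⟨⟨?_, ?_⟩, ?_, ?_⟩
  · -- sections S[Fs, -] stable
    intro Fs
    set G : Set L := {x | ∃ a : Fin n → L, (∀ i, a i ∈ (Fs i).val) ∧ f a ≤ x} with hG
    have hGfilt : IsLatFilter G := by
      refine ⟨?_, ?_, ?_⟩
      · refine ⟨f (fun i => ((Fs i).2.1).choose), fun i => ((Fs i).2.1).choose,
          fun i => ((Fs i).2.1).choose_spec, le_rfl⟩
      · rintro x y ⟨a, ha, hfa⟩ hxy; exact ⟨a, ha, hfa.trans hxy⟩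
      · rintro x y ⟨a, ha, hfa⟩ ⟨a', ha', hfa'⟩
        refine ⟨fun i => a i ⊓ a' i, fun i => (Fs i).2.2.2 (ha i) (ha' i), le_inf ?_ ?_⟩
        · exact (fmono fun i => inf_le_left).trans hfa
        · exact (fmono fun i => inf_le_right).trans hfa'
    refine Helper15.stableY_of_eq (⟨G, hGfilt⟩ : Filt L) ?_
    ext D
    simp only [Set.mem_setOf_eq, SL, canR]
    constructor
    · rintro ⟨a, ha, hfa⟩; exact ⟨f a, ⟨a, ha, le_rfl⟩, hfa⟩
    · rintro ⟨x, ⟨a, ha, hfa⟩, hxD⟩; exact ⟨a, ha, D.2.2.1 hxD hfa⟩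
  · -- sections S[Fs[-]_i, D] stable
    intro Fs i D
    set I : Set L :=
      {b | ∃ a : Fin n → L, (∀ j, j ≠ i → a j ∈ (Fs j).val) ∧ f (Function.update a i b) ∈ D.val}
      with hI
    have hIideal : IsLatIdeal I := by
      refine ⟨?_, ?_, ?_⟩
      · refine ⟨⊥, fun j => ((Fs j).2.1).choose, fun j _ => ((Fs j).2.1).choose_spec, ?_⟩
        rw [hf_bot i _]
        exact D.2.2.1 D.2.1.choose_spec bot_le
      · rintro b b' ⟨a, ha, hfa⟩ hb'
        exact ⟨a, ha, D.2.2.1 hfa (fmono (Helper15.update_le_update (fun j _ => le_rfl) hb'))⟩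
      · rintro b c ⟨a, ha, hfa⟩ ⟨a', ha', hfa'⟩
        refine ⟨fun j => a j ⊓ a' j, fun j hj => (Fs j).2.2.2 (ha j hj) (ha' j hj), ?_⟩
        rw [hf_join i _ b c]
        refine D.2.2.1 (D.2.2.2 hfa hfa') (sup_le_sup ?_ ?_)
        · exact fmono (Helper15.update_le_update (fun j _ => inf_le_left) le_rfl)
        · exact fmono (Helper15.update_le_update (fun j _ => inf_le_right) le_rfl)
    refine Helper15.stableX_of_eq (⟨I, hIideal⟩ : Idl L) ?_
    ext F'
    simp only [Set.mem_setOf_eq, SL, canR]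
    constructor
    · rintro ⟨a, ha, hfa⟩
      refine ⟨a i, ?_, a, fun j hj => ?_, ?_⟩
      · have := ha i; rwa [Function.update_self] at this
      · have := ha j; rwa [Function.update_of_ne hj] at this
      · rwa [Function.update_eq_self]
    · rintro ⟨b, hbF, a, ha, hfa⟩
      refine ⟨Function.update a i b, fun j => ?_, hfa⟩
      rcases eq_or_ne j i with rfl | hj
      · simpa using hbF
      · simpa [Function.update_of_ne hj] using ha j hj
  · -- sections T[-, ys] stable
    intro ys
    set I : Set L := {x | ∃ a : Fin m → L, (∀ i, a i ∈ (ys i).val) ∧ x ≤ g a} with hI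
    have hIideal : IsLatIdeal I := by
      refine ⟨?_, ?_, ?_⟩
      · exact ⟨g (fun i => ((ys i).2.1).choose), fun i => ((ys i).2.1).choose,
          fun i => ((ys i).2.1).choose_spec, le_rfl⟩
      · rintro x y ⟨a, ha, hxa⟩ hyx; exact ⟨a, ha, hyx.trans hxa⟩
      · rintro x y ⟨a, ha, hxa⟩ ⟨a', ha', hya'⟩
        refine ⟨fun i => a i ⊔ a' i, fun i => (ys i).2.2.2 (ha i) (ha' i), sup_le ?_ ?_⟩
        · exact hxa.trans (gmono fun i => le_sup_left)
        · exact hya'.trans (gmono fun i => le_sup_right)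
    refine Helper15.stableX_of_eq (⟨I, hIideal⟩ : Idl L) ?_
    ext F
    simp only [Set.mem_setOf_eq, TL, canR]
    constructor
    · rintro ⟨a, ha, hga⟩; exact ⟨g a, hga, a, ha, le_rfl⟩
    · rintro ⟨x, hxF, a, ha, hxa⟩; exact ⟨a, ha, F.2.2.1 hxF hxa⟩
  · -- sections T[F, ys[-]_i] stable
    intro F ys i
    set G : Set L :=
      {b | ∃ a : Fin m → L, (∀ j, j ≠ i → a j ∈ (ys j).val) ∧ g (Function.update a i b) ∈ F.val}
      with hG
    have hGfilt : IsLatFilter G := by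
      refine ⟨?_, ?_, ?_⟩
      · refine ⟨⊤, fun j => ((ys j).2.1).choose, fun j _ => ((ys j).2.1).choose_spec, ?_⟩
        rw [hg_top i _]
        exact F.2.2.1 F.2.1.choose_spec le_top
      · rintro b b' ⟨a, ha, hga⟩ hb'
        exact ⟨a, ha, F.2.2.1 hga (gmono (Helper15.update_le_update (fun j _ => le_rfl) hb'))⟩
      · rintro b c ⟨a, ha, hga⟩ ⟨a', ha', hga'⟩
        refine ⟨fun j => a j ⊔ a' j, fun j hj => (ys j).2.2.2 (ha j hj) (ha' j hj), ?_⟩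
        rw [hg_meet i _ b c]
        refine F.2.2.1 (F.2.2.2 hga hga') (inf_le_inf ?_ ?_)
        · exact gmono (Helper15.update_le_update (fun j _ => le_sup_left) le_rfl)
        · exact gmono (Helper15.update_le_update (fun j _ => le_sup_right) le_rfl)
    refine Helper15.stableY_of_eq (⟨G, hGfilt⟩ : Filt L) ?_
    ext D'
    simp only [Set.mem_setOf_eq, TL, canR]
    constructor
    · rintro ⟨a, ha, hga⟩
      refine ⟨a i, ⟨a, fun j hj => ?_, ?_⟩, ?_⟩
      · have := ha j; rwa [Function.update_of_ne hj] at this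
      · rwa [Function.update_eq_self]
      · have := ha i; rwa [Function.update_self] at this
    · rintro ⟨b, ⟨a, ha, hga⟩, hbD⟩
      refine ⟨Function.update a i b, fun j => ?_, hga⟩
      rcases eq_or_ne j i with rfl | hj
      · simpa using hbD
      · simpa [Function.update_of_ne hj] using ha j hj
end

section
/- Let L be a bounded lattice and (𝓕_L, 𝓘_L, ⋔) its canonical polarity. For a ∈ L let θ(a) = {F ∈ 𝓕_L : a ∈ F}. Then: (i) each θ(a) is a stable subset of 𝓕_L; (ii) θ is an injective lattice embedding of L into the stable set lattice: θ(a ∧ b) = θ(a) ∩ θ(b), θ(a ∨ b) = λ_⋔ ρ_⋔ (θ(a) ∪ θ(b)), θ(1) = 𝓕_L, θ(0) = λ_⋔ 𝓘_L; (iii) the completion is dense: every stable subset A of 𝓕_L satisfies A = λ_⋔ ρ_⋔ (⋃_{F∈A} ⋂_{a∈F} θ(a)) and A = ⋂_{D ∈ ρ_⋔ A} λ_⋔ ρ_⋔ (⋃_{a∈D} θ(a)); (iv) the completion is compact: for all Z, W ⊆ L, if ⋂_{a∈Z} θ(a) ⊆ λ_⋔ ρ_⋔ (⋃_{b∈W}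 θ(b)), then there exist finite Z′ ⊆ Z and W′ ⊆ W with ⋀Z′ ≤ ⋁W′ in L. Thus the stable set lattice of the canonical polarity is a canonical extension of L. -/
lemma princFilt {L : Type*} [Lattice L] (a : L) : IsLatFilter {b | a ≤ b} :=
  ⟨⟨a, le_refl a⟩, fun _ _ h h' => le_trans h h', fun _ _ h h' => le_inf h h'⟩

lemma princIdl {L : Type*} [Lattice L] (a : L) : IsLatIdeal {b | b ≤ a} :=
  ⟨⟨a, le_refl a⟩, fun _ _ h h' => le_trans h' h, fun _ _ h h' => sup_le h h'⟩

/-- The map `θ a = {F ∈ 𝓕_L : a ∈ F}` embeds a bounded lattice `L` densely and compactly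
into the stable set lattice of its canonical polarity, which is therefore a canonical
extension of `L`. -/
theorem stmt16 {L : Type*} [Lattice L] [BoundedOrder L] :
    -- (i) each `θ a` is stable
    (∀ a : L, StableX (canR (L := L)) {F : Filt L | a ∈ F.val}) ∧
    -- (ii) `θ` is an injective lattice embedding into the stable set lattice
    (∀ a b : L, {F : Filt L | a ⊓ b ∈ F.val} =
      {F : Filt L | a ∈ F.val} ∩ {F : Filt L | b ∈ F.val}) ∧
    (∀ a b : L, {F : Filt L | a ⊔ b ∈ F.val} =
      lpolar (canR (L := L)) (rpolar (canR (L := L))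
        ({F : Filt L | a ∈ F.val} ∪ {F : Filt L | b ∈ F.val}))) ∧
    ({F : Filt L | (⊤ : L) ∈ F.val} = (Set.univ : Set (Filt L))) ∧
    ({F : Filt L | (⊥ : L) ∈ F.val} = lpolar (canR (L := L)) (Set.univ : Set (Idl L))) ∧
    Function.Injective (fun a : L => {F : Filt L | a ∈ F.val}) ∧
    -- (iii) density: every stable set is a join of meets and a meet of joins of `θ`-images
    (∀ A : Set (Filt L), StableX (canR (L := L)) A →
      A = lpolar (canR (L := L)) (rpolar (canR (L := L))
            (⋃ F ∈ A, ⋂ a ∈ (F : Filt L).val, {G : Filt L | a ∈ G.val}))) ∧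
    (∀ A : Set (Filt L), StableX (canR (L := L)) A →
      A = ⋂ D ∈ rpolar (canR (L := L)) A,
            lpolar (canR (L := L)) (rpolar (canR (L := L))
              (⋃ a ∈ (D : Idl L).val, {G : Filt L | a ∈ G.val}))) ∧
    -- (iv) compactness
    (∀ Z W : Set L,
      (⋂ a ∈ Z, {F : Filt L | a ∈ F.val}) ⊆
        lpolar (canR (L := L)) (rpolar (canR (L := L))
          (⋃ b ∈ W, {F : Filt L | b ∈ F.val})) →
      ∃ Z' W' : Finset L, ↑Z' ⊆ Z ∧ ↑W' ⊆ W ∧ Z'.inf id ≤ W'.sup id) := by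
  refine ⟨?_, ?_, ?_, ?_, ?_, ?_, ?_, ?_, ?_⟩
  · -- (i) stability
    intro a
    apply Set.Subset.antisymm
    · intro F hF D hD
      exact hD F hF
    · intro F hF
      obtain ⟨c, hcF, hca⟩ := hF ⟨{b | b ≤ a}, princIdl a⟩
        (fun G hG => ⟨a, hG, le_refl a⟩)
      exact F.2.2.1 hcF hca
  · -- meet
    intro a b
    ext F
    constructor
    · intro h
      exact ⟨F.2.2.1 h inf_le_left, F.2.2.1 h inf_le_right⟩
    · intro ⟨ha, hb⟩
      exact F.2.2.2 ha hb
  · -- join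
    intro a b
    apply Set.Subset.antisymm
    · intro F hF D hD
      obtain ⟨c, hca, hcD⟩ := hD ⟨{x | a ≤ x}, princFilt a⟩ (Or.inl (le_refl a))
      obtain ⟨d, hdb, hdD⟩ := hD ⟨{x | b ≤ x}, princFilt b⟩ (Or.inr (le_refl b))
      exact ⟨a ⊔ b, hF, D.2.2.1 (D.2.2.2 hcD hdD) (sup_le_sup hca hdb)⟩
    · intro F hF
      have hmem : (⟨{x | x ≤ a ⊔ b}, princIdl (a ⊔ b)⟩ : Idl L) ∈
          rpolar (canR (L := L)) ({F : Filt L | a ∈ F.val} ∪ {F : Filt L | b ∈ F.val}) := by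
        rintro G (hG | hG)
        · exact ⟨a, hG, le_sup_left⟩
        · exact ⟨b, hG, le_sup_right⟩
      obtain ⟨c, hcF, hc⟩ := hF _ hmem
      exact F.2.2.1 hcF hc
  · -- top
    ext F
    simp only [Set.mem_setOf_eq, Set.mem_univ, iff_true]
    obtain ⟨c, hc⟩ := F.2.1
    exact F.2.2.1 hc le_top
  · -- bot
    ext F
    constructor
    · intro h D _
      obtain ⟨c, hc⟩ := D.2.1
      exact ⟨⊥, h, D.2.2.1 hc bot_le⟩
    · intro h
      obtain ⟨c, hcF, hc⟩ := h ⟨{b | b ≤ (⊥ : L)}, princIdl ⊥⟩ (Set.mem_univ _)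
      exact F.2.2.1 hcF hc
  · -- injectivity
    intro a b hab
    have h1 : ∀ x y : L, ({F : Filt L | x ∈ F.val} = {F : Filt L | y ∈ F.val}) → x ≤ y := by
      intro x y h
      have hx : (⟨{c | x ≤ c}, princFilt x⟩ : Filt L) ∈ {F : Filt L | x ∈ F.val} :=
        le_refl x
      rw [h] at hx
      exact hx
    exact le_antisymm (h1 a b hab) (h1 b a hab.symm)
  · -- density 1
    intro A hA
    have key : rpolar (canR (L := L)) A =
        rpolar (canR (L := L)) (⋃ F ∈ A, ⋂ a ∈ (F : Filt L).val, {G : Filt L | a ∈ G.val}) := by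
      apply Set.Subset.antisymm
      · intro D hD G hG
        simp only [Set.mem_iUnion, Set.mem_iInter] at hG
        obtain ⟨F, hFA, hFG⟩ := hG
        obtain ⟨c, hcF, hcD⟩ := hD F hFA
        exact ⟨c, hFG c hcF, hcD⟩
      · intro D hD F hF
        apply hD F
        simp only [Set.mem_iUnion, Set.mem_iInter]
        exact ⟨F, hF, fun a ha => ha⟩
    rw [← key]
    exact hA
  · -- density 2
    intro A hA
    have key : ∀ D : Idl L, D ∈ rpolar (canR (L := L)) A →
        lpolar (canR (L := L)) (rpolar (canR (L := L))
          (⋃ a ∈ (D : Idl L).val, {G : Filt L | a ∈ G.val})) =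
        {F : Filt L | canR F D} := by
      intro D _
      have hB : (⋃ a ∈ (D : Idl L).val, {G : Filt L | a ∈ G.val}) =
          {F : Filt L | canR F D} := by
        ext F
        simp only [Set.mem_iUnion, Set.mem_setOf_eq]
        exact ⟨fun ⟨a, ha, haF⟩ => ⟨a, haF, ha⟩, fun ⟨a, haF, ha⟩ => ⟨a, ha, haF⟩⟩
      rw [hB]
      apply Set.Subset.antisymm
      · intro F hF
        exact hF D (fun G hG => hG)
      · intro F hF E hE
        exact hE F hF
    apply Set.Subset.antisymm
    · intro F hF
      simp only [Set.mem_iInter]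
      intro D hD
      rw [key D hD]
      exact hD F hF
    · intro F hF
      rw [hA]
      intro D hD
      simp only [Set.mem_iInter] at hF
      have := hF D hD
      rw [key D hD] at this
      exact this
  · -- compactness
    intro Z W hZW
    classical
    set F : Set L := {c | ∃ Z' : Finset L, ↑Z' ⊆ Z ∧ Z'.inf id ≤ c} with hFdef
    have hFfilt : IsLatFilter F := by
      refine ⟨⟨⊤, ∅, by simp, le_top⟩, ?_, ?_⟩
      · rintro a b ⟨Z', hZ', h⟩ hab
        exact ⟨Z', hZ', le_trans h hab⟩
      · rintro a b ⟨Z1, hZ1, h1⟩ ⟨Z2, hZ2, h2⟩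
        refine ⟨Z1 ∪ Z2, ?_, le_inf ?_ ?_⟩
        · rw [Finset.coe_union]; exact Set.union_subset hZ1 hZ2
        · exact le_trans (Finset.inf_mono Finset.subset_union_left) h1
        · exact le_trans (Finset.inf_mono Finset.subset_union_right) h2
    set D : Set L := {c | ∃ W' : Finset L, ↑W' ⊆ W ∧ c ≤ W'.sup id} with hDdef
    have hDidl : IsLatIdeal D := by
      refine ⟨⟨⊥, ∅, by simp, bot_le⟩, ?_, ?_⟩
      · rintro a b ⟨W', hW', h⟩ hba
        exact ⟨W', hW', le_trans hba h⟩
      · rintro a b ⟨W1, hW1, h1⟩ ⟨W2, hW2, h2⟩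
        refine ⟨W1 ∪ W2, ?_, sup_le ?_ ?_⟩
        · rw [Finset.coe_union]; exact Set.union_subset hW1 hW2
        · exact le_trans h1 (Finset.sup_mono Finset.subset_union_left)
        · exact le_trans h2 (Finset.sup_mono Finset.subset_union_right)
    have hFmem : (⟨F, hFfilt⟩ : Filt L) ∈ ⋂ a ∈ Z, {G : Filt L | a ∈ G.val} := by
      simp only [Set.mem_iInter, Set.mem_setOf_eq]
      intro a ha
      exact ⟨{a}, by simpa using ha, by simp⟩
    have hDmem : (⟨D, hDidl⟩ : Idl L) ∈ rpolar (canR (L := L))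
        (⋃ b ∈ W, {G : Filt L | b ∈ G.val}) := by
      intro G hG
      simp only [Set.mem_iUnion] at hG
      obtain ⟨b, hb, hbG⟩ := hG
      exact ⟨b, hbG, {b}, by simpa using hb, by simp⟩
    obtain ⟨c, hcF, hcD⟩ := hZW hFmem _ hDmem
    obtain ⟨Z', hZ', h1⟩ := hcF
    obtain ⟨W', hW', h2⟩ := hcD
    exact ⟨Z', W', hZ', hW', le_trans h1 h2⟩
end

section
/- Let L and M be bounded lattices equipped with normal operators f_L : Lⁿ → L, f_M : Mⁿ → M and normal dual operators g_L : Lᵐ → L, g_M : Mᵐ → M, and let θ : L → M preserve 0, 1, binary meets and binary joins and satisfy θ(f_L(a⃗)) = f_M(θ(a₀),…,θ(a_{n−1})) and θ(g_L(a⃗)) = g_M(θ(a₀),…,θ(a_{m−1})) for all tuples a⃗. Then θ⁻¹ maps nonempty filters (ideals) of M to nonempty filters (ideals) of L, and the pair θ₊ = (α_θ, β_θ), where α_θ(F) = θ⁻¹F and β_θ(D) = θ⁻¹D, is a bounded morphism from the canonical structure M₊ = (𝓕_M, 𝓘_M, ⋔, S_M, T_M) to L₊ = (𝓕_L, 𝓘_L,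 ⋔, S_L, T_L). Moreover: if θ is injective then α_θ and β_θ are surjective; if θ is surjective then α_θ and β_θ are injective and θ₊ preserves the relations ⋔, S_M and T_M, hence θ₊ is an isomorphism from M₊ onto the inner substructure im(θ₊) of L₊. -/
/-- The polarity relation of the image structure `im(α, β)`, on the images of `α` and `β`. -/
def imR {X Y X' Y' : Type*} (R' : X' → Y' → Prop) (α : X → X') (β : Y → Y') :
    ↥(Set.range α) → ↥(Set.range β) → Prop :=
  fun x y => R' x.val y.val

/-- The `S`-relation of the image structure `im(α, β)`. -/
def imS {X Y X' Y' : Type*} {n : ℕ} (S' : (Fin n → X') → Y' → Prop)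
    (α : X → X') (β : Y → Y') :
    (Fin n → ↥(Set.range α)) → ↥(Set.range β) → Prop :=
  fun xs y => S' (fun i => (xs i).val) y.val

/-- The `T`-relation of the image structure `im(α, β)`. -/
def imT {X Y X' Y' : Type*} {m : ℕ} (T' : X' → (Fin m → Y') → Prop)
    (α : X → X') (β : Y → Y') :
    ↥(Set.range α) → (Fin m → ↥(Set.range β)) → Prop :=
  fun x ys => T' x.val (fun i => (ys i).val)
lemma principalFilter' {K : Type*} [Lattice K] (a : K) : IsLatFilter {b : K | a ≤ b} :=
  ⟨⟨a, le_refl a⟩, fun _ _ h h' => le_trans h h', fun _ _ h h' => le_inf h h'⟩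

lemma principalIdeal' {K : Type*} [Lattice K] (a : K) : IsLatIdeal {b : K | b ≤ a} :=
  ⟨⟨a, le_refl a⟩, fun _ _ h h' => le_trans h' h, fun _ _ h h' => sup_le h h'⟩

lemma le1_canR_iff {K : Type*} [Lattice K] {F F' : Filt K} :
    le1 (canR (L := K)) F F' ↔ F.val ⊆ F'.val := by
  constructor
  · intro h a ha
    have hmem : (⟨{b | b ≤ a}, principalIdeal' a⟩ : Idl K) ∈ rpolar (canR (L := K)) {F} := by
      intro x hx
      rw [Set.mem_singleton_iff] at hx; subst hx
      exact ⟨a, ha, le_refl a⟩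
    obtain ⟨c, hc1, hc2⟩ := h hmem F' rfl
    exact F'.2.2.1 hc1 hc2
  · intro h D hD x hx
    rw [Set.mem_singleton_iff] at hx; subst hx
    obtain ⟨c, hc1, hc2⟩ := hD F rfl
    exact ⟨c, h hc1, hc2⟩

lemma le2_canR_iff {K : Type*} [Lattice K] {D D' : Idl K} :
    le2 (canR (L := K)) D D' ↔ D.val ⊆ D'.val := by
  constructor
  · intro h a ha
    have hmem : (⟨{b | a ≤ b}, principalFilter' a⟩ : Filt K) ∈ lpolar (canR (L := K)) {D} := by
      intro y hy
      rw [Set.mem_singleton_iff] at hy; subst hy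
      exact ⟨a, le_refl a, ha⟩
    obtain ⟨c, hc1, hc2⟩ := h hmem D' rfl
    exact D'.2.2.1 hc2 hc1
  · intro h F hF y hy
    rw [Set.mem_singleton_iff] at hy; subst hy
    obtain ⟨c, hc1, hc2⟩ := hF D rfl
    exact ⟨c, hc1, h hc2⟩

lemma update_mono_of_step {K : Type*} [Lattice K] {n : ℕ} (f : (Fin n → K) → K)
    (step : ∀ (i : Fin n) (a : Fin n → K) (x y : K), x ≤ y →
      f (Function.update a i x) ≤ f (Function.update a i y))
    {c d : Fin n → K} (h : ∀ i, c i ≤ d i) : f c ≤ f d := by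
  have key : ∀ k : ℕ, k ≤ n →
      f c ≤ f (fun i => if (i : ℕ) < k then d i else c i) := by
    intro k
    induction k with
    | zero =>
      intro _
      have he : (fun i : Fin n => if (i : ℕ) < 0 then d i else c i) = c := by
        funext i; simp
      rw [he]
    | succ k ih =>
      intro hk
      have hkn : k < n := hk
      have h1 : (fun i : Fin n => if (i : ℕ) < k then d i else c i) =
          Function.update (fun i : Fin n => if (i : ℕ) < k + 1 then d i else c i)
            ⟨k, hkn⟩ (c ⟨k, hkn⟩) := by
        funext j
        rcases eq_or_ne j ⟨k, hkn⟩ with rfl | hj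
        · simp
        · have hjk : (j : ℕ) ≠ k := fun hh => hj (Fin.ext hh)
          rw [Function.update_of_ne hj]
          by_cases hlt : (j : ℕ) < k
          · simp only [if_pos hlt, if_pos (Nat.lt_succ_of_lt hlt)]
          · have hlt' : ¬ (j : ℕ) < k + 1 := by omega
            simp only [if_neg hlt, if_neg hlt']
      have h2 : (fun i : Fin n => if (i : ℕ) < k + 1 then d i else c i) =
          Function.update (fun i : Fin n => if (i : ℕ) < k + 1 then d i else c i)
            ⟨k, hkn⟩ (d ⟨k, hkn⟩) := by
        funext j
        rcases eq_or_ne j ⟨k, hkn⟩ with rfl | hj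
        · simp
        · rw [Function.update_of_ne hj]
      calc f c ≤ f (fun i : Fin n => if (i : ℕ) < k then d i else c i) := ih (Nat.le_of_lt hkn)
        _ = f (Function.update (fun i : Fin n => if (i : ℕ) < k + 1 then d i else c i)
              ⟨k, hkn⟩ (c ⟨k, hkn⟩)) := by rw [← h1]
        _ ≤ f (Function.update (fun i : Fin n => if (i : ℕ) < k + 1 then d i else c i)
              ⟨k, hkn⟩ (d ⟨k, hkn⟩)) := step _ _ _ _ (h _)
        _ = f (fun i : Fin n => if (i : ℕ) < k + 1 then d i else c i) := by rw [← h2]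
  have hn := key n (le_refl n)
  have he : (fun i : Fin n => if (i : ℕ) < n then d i else c i) = d := by
    funext i; simp [i.isLt]
  rwa [he] at hn

/-- The dual `θ₊ = (α_θ, β_θ)` of a homomorphism `θ` of bounded lattices with a normal
operator and a normal dual operator is a bounded morphism between the canonical
structures; it is surjective in both components when `θ` is injective, and, when `θ` is
surjective, injective in both components, relation-preserving, and an isomorphism onto
the inner substructure `im(θ₊)`. -/
theorem stmt17 {L M : Type*} [Lattice L] [BoundedOrder L] [Lattice M] [BoundedOrder M]
    {n m : ℕ}
    (fL : (Fin n → L) → L) (fM : (Fin n → M) → M)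
    (gL : (Fin m → L) → L) (gM : (Fin m → M) → M)
    -- normal operators
    (hfL_join : ∀ (i : Fin n) (a : Fin n → L) (b c : L),
      fL (Function.update a i (b ⊔ c)) =
        fL (Function.update a i b) ⊔ fL (Function.update a i c))
    (hfL_bot : ∀ (i : Fin n) (a : Fin n → L), fL (Function.update a i ⊥) = ⊥)
    (hfM_join : ∀ (i : Fin n) (a : Fin n → M) (b c : M),
      fM (Function.update a i (b ⊔ c)) =
        fM (Function.update a i b) ⊔ fM (Function.update a i c))
    (hfM_bot : ∀ (i : Fin n) (a : Fin n → M), fM (Function.update a i ⊥) = ⊥)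
    -- normal dual operators
    (hgL_meet : ∀ (i : Fin m) (a : Fin m → L) (b c : L),
      gL (Function.update a i (b ⊓ c)) =
        gL (Function.update a i b) ⊓ gL (Function.update a i c))
    (hgL_top : ∀ (i : Fin m) (a : Fin m → L), gL (Function.update a i ⊤) = ⊤)
    (hgM_meet : ∀ (i : Fin m) (a : Fin m → M) (b c : M),
      gM (Function.update a i (b ⊓ c)) =
        gM (Function.update a i b) ⊓ gM (Function.update a i c))
    (hgM_top : ∀ (i : Fin m) (a : Fin m → M), gM (Function.update a i ⊤) = ⊤)
    -- `θ` is a homomorphism of bounded lattices with operators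
    (θ : L → M) (hbot : θ ⊥ = ⊥) (htop : θ ⊤ = ⊤)
    (hinf : ∀ a b : L, θ (a ⊓ b) = θ a ⊓ θ b) (hsup : ∀ a b : L, θ (a ⊔ b) = θ a ⊔ θ b)
    (hfθ : ∀ a : Fin n → L, θ (fL a) = fM (fun i => θ (a i)))
    (hgθ : ∀ a : Fin m → L, θ (gL a) = gM (fun i => θ (a i))) :
    -- `θ⁻¹` maps nonempty filters to nonempty filters and ideals to ideals
    (∀ F : Set M, IsLatFilter F → IsLatFilter (θ ⁻¹' F)) ∧
    (∀ D : Set M, IsLatIdeal D → IsLatIdeal (θ ⁻¹' D)) ∧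
    ∃ (αθ : Filt M → Filt L) (βθ : Idl M → Idl L),
      (∀ F : Filt M, (αθ F).val = θ ⁻¹' F.val) ∧
      (∀ D : Idl M, (βθ D).val = θ ⁻¹' D.val) ∧
      -- `θ₊` is a bounded morphism from `M₊` to `L₊`
      IsBddMorphism (canR (L := M)) (SL fM) (TL gM)
        (canR (L := L)) (SL fL) (TL gL) αθ βθ ∧
      -- if `θ` is injective then `α_θ` and `β_θ` are surjective
      (Function.Injective θ → Function.Surjective αθ ∧ Function.Surjective βθ) ∧
      -- if `θ` is surjective then `α_θ`, `β_θ` are injective, `θ₊` preserves the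
      -- relations, and `θ₊` is an isomorphism from `M₊` onto `im(θ₊)`
      (Function.Surjective θ →
        Function.Injective αθ ∧ Function.Injective βθ ∧
        (∀ (F : Filt M) (D : Idl M), canR F D → canR (αθ F) (βθ D)) ∧
        (∀ (Fs : Fin n → Filt M) (D : Idl M),
          SL fM Fs D → SL fL (fun i => αθ (Fs i)) (βθ D)) ∧
        (∀ (F : Filt M) (Ds : Fin m → Idl M),
          TL gM F Ds → TL gL (αθ F) (fun i => βθ (Ds i))) ∧
        (IsBddMorphism (canR (L := M)) (SL fM) (TL gM)
            (imR (canR (L := L)) αθ βθ) (imS (SL fL) αθ βθ) (imT (TL gL) αθ βθ)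
            (fun F => ⟨αθ F, Set.mem_range_self F⟩)
            (fun D => ⟨βθ D, Set.mem_range_self D⟩) ∧
          ∃ (α' : ↥(Set.range αθ) → Filt M) (β' : ↥(Set.range βθ) → Idl M),
            IsBddMorphism (imR (canR (L := L)) αθ βθ) (imS (SL fL) αθ βθ)
              (imT (TL gL) αθ βθ) (canR (L := M)) (SL fM) (TL gM) α' β' ∧
            (∀ F : Filt M, α' ⟨αθ F, Set.mem_range_self F⟩ = F) ∧
            (∀ D : Idl M, β' ⟨βθ D, Set.mem_range_self D⟩ = D) ∧
            (∀ F' : ↥(Set.range αθ), αθ (α' F') = F'.val) ∧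
            (∀ D' : ↥(Set.range βθ), βθ (β' D') = D'.val))) := by
  classical
  -- θ is monotone
  have θmono : ∀ ⦃a b : L⦄, a ≤ b → θ a ≤ θ b := by
    intro a b h
    have h2 := hinf a b
    rw [inf_eq_left.mpr h] at h2
    rw [h2]; exact inf_le_right
  -- fM and gM are monotone
  have fMmono : ∀ {c d : Fin n → M}, (∀ i, c i ≤ d i) → fM c ≤ fM d := by
    intro c d h
    refine update_mono_of_step fM ?_ h
    intro i a x y hxy
    have h1 : fM (Function.update a i x) ⊔ fM (Function.update a i y) =
        fM (Function.update a i y) := by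
      rw [← hfM_join i a x y, sup_eq_right.mpr hxy]
    calc fM (Function.update a i x)
        ≤ fM (Function.update a i x) ⊔ fM (Function.update a i y) := le_sup_left
      _ = fM (Function.update a i y) := h1
  have gMmono : ∀ {c d : Fin m → M}, (∀ i, c i ≤ d i) → gM c ≤ gM d := by
    intro c d h
    refine update_mono_of_step gM ?_ h
    intro i a x y hxy
    have h1 := hgM_meet i a x y
    rw [inf_eq_left.mpr hxy] at h1
    rw [h1]; exact inf_le_right
  -- preimages of filters and ideals
  have hFpre : ∀ F : Set M, IsLatFilter F → IsLatFilter (θ ⁻¹' F) := by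
    rintro F ⟨⟨b, hb⟩, hup, hmeet⟩
    refine ⟨⟨⊤, ?_⟩, ?_, ?_⟩
    · show θ ⊤ ∈ F; rw [htop]; exact hup hb le_top
    · intro a c ha hac
      exact hup ha (θmono hac)
    · intro a c ha hc
      show θ (a ⊓ c) ∈ F; rw [hinf]; exact hmeet ha hc
  have hDpre : ∀ D : Set M, IsLatIdeal D → IsLatIdeal (θ ⁻¹' D) := by
    rintro D ⟨⟨b, hb⟩, hdn, hjoin⟩
    refine ⟨⟨⊥, ?_⟩, ?_, ?_⟩
    · show θ ⊥ ∈ D; rw [hbot]; exact hdn hb bot_le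
    · intro a c ha hac
      exact hdn ha (θmono hac)
    · intro a c ha hc
      show θ (a ⊔ c) ∈ D; rw [hsup]; exact hjoin ha hc
  let αθ : Filt M → Filt L := fun F => ⟨θ ⁻¹' F.val, hFpre _ F.2⟩
  let βθ : Idl M → Idl L := fun D => ⟨θ ⁻¹' D.val, hDpre _ D.2⟩
  -- upward / downward closures of images
  have upF : ∀ G : Filt L, IsLatFilter {b : M | ∃ a ∈ G.val, θ a ≤ b} := by
    intro G
    obtain ⟨⟨a0, ha0⟩, hup, hmeet⟩ := G.2
    refine ⟨⟨θ a0, a0, ha0, le_refl _⟩, ?_, ?_⟩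
    · rintro b c ⟨a, ha, hab⟩ hbc
      exact ⟨a, ha, le_trans hab hbc⟩
    · rintro b c ⟨a, ha, hab⟩ ⟨a', ha', ha'c⟩
      exact ⟨a ⊓ a', hmeet ha ha', by rw [hinf]; exact inf_le_inf hab ha'c⟩
  have dnD : ∀ E : Idl L, IsLatIdeal {b : M | ∃ a ∈ E.val, b ≤ θ a} := by
    intro E
    obtain ⟨⟨a0, ha0⟩, hdn, hjoin⟩ := E.2
    refine ⟨⟨θ a0, a0, ha0, le_refl _⟩, ?_, ?_⟩
    · rintro b c ⟨a, ha, hab⟩ hbc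
      exact ⟨a, ha, le_trans hbc hab⟩
    · rintro b c ⟨a, ha, hab⟩ ⟨a', ha', ha'c⟩
      exact ⟨a ⊔ a', hjoin ha ha', by rw [hsup]; exact sup_le_sup hab ha'c⟩
  have upF_sub : ∀ G : Filt L, le1 (canR (L := L)) G (αθ ⟨_, upF G⟩) := by
    intro G
    refine le1_canR_iff.mpr ?_
    intro a ha
    show θ a ∈ {b : M | ∃ a ∈ G.val, θ a ≤ b}
    exact ⟨a, ha, le_refl _⟩
  have dnD_sub : ∀ E : Idl L, le2 (canR (L := L)) E (βθ ⟨_, dnD E⟩) := by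
    intro E
    refine le2_canR_iff.mpr ?_
    intro a ha
    show θ a ∈ {b : M | ∃ a ∈ E.val, b ≤ θ a}
    exact ⟨a, ha, le_refl _⟩
  -- back conditions
  have backRm : ∀ (F : Filt M) (D : Idl M), canR (αθ F) (βθ D) → canR F D := by
    rintro F D ⟨a, ha1, ha2⟩
    exact ⟨θ a, ha1, ha2⟩
  have backSm : ∀ (Fs : Fin n → Filt M) (D : Idl M),
      SL fL (fun i => αθ (Fs i)) (βθ D) → SL fM Fs D := by
    rintro Fs D ⟨a, ha, hf⟩
    refine ⟨fun i => θ (a i), ha, ?_⟩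
    rw [← hfθ]; exact hf
  have backTm : ∀ (F : Filt M) (Ds : Fin m → Idl M),
      TL gL (αθ F) (fun i => βθ (Ds i)) → TL gM F Ds := by
    rintro F Ds ⟨a, ha, hg⟩
    refine ⟨fun i => θ (a i), ha, ?_⟩
    rw [← hgθ]; exact hg
  refine ⟨hFpre, hDpre, αθ, βθ, fun _ => rfl, fun _ => rfl, ?_, ?_, ?_⟩
  · -- the main bounded morphism
    refine ⟨?_, ?_, ?_, ?_, ?_, ?_, ?_, ?_, ?_⟩
    · intro F F' h
      refine le1_canR_iff.mpr ?_
      intro a ha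
      exact le1_canR_iff.mp h ha
    · intro D D' h
      refine le2_canR_iff.mpr ?_
      intro a ha
      exact le2_canR_iff.mp h ha
    · intro F D h; exact backRm F D h
    · intro G D h
      obtain ⟨b, hbF, hbD⟩ := h ⟨_, upF G⟩ (upF_sub G)
      obtain ⟨a, haG, hab⟩ := hbF
      exact ⟨a, haG, D.2.2.1 hbD hab⟩
    · intro F E h
      obtain ⟨b, hbF, a, haE, hba⟩ := h ⟨_, dnD E⟩ (dnD_sub E)
      exact ⟨a, F.2.2.1 hbF hba, haE⟩
    · intro Fs D h; exact backSm Fs D h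
    · intro Fs' D h
      obtain ⟨b, hb, hfb⟩ := h (fun i => ⟨_, upF (Fs' i)⟩) (fun i => upF_sub (Fs' i))
      choose a ha1 ha2 using hb
      refine ⟨a, ha1, ?_⟩
      show θ (fL a) ∈ D.val
      rw [hfθ]
      exact D.2.2.1 hfb (fMmono ha2)
    · intro F Ds h; exact backTm F Ds h
    · intro F Ds' h
      obtain ⟨b, hb, hgb⟩ := h (fun i => ⟨_, dnD (Ds' i)⟩) (fun i => dnD_sub (Ds' i))
      choose a ha1 ha2 using hb
      refine ⟨a, ha1, ?_⟩
      show θ (gL a) ∈ F.val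
      rw [hgθ]
      exact F.2.2.1 hgb (gMmono ha2)
  · -- injectivity of θ gives surjectivity
    intro hinj
    have θrefl : ∀ ⦃a b : L⦄, θ a ≤ θ b → a ≤ b := by
      intro a b h
      have h1 : θ (a ⊓ b) = θ a := by rw [hinf, inf_eq_left.mpr h]
      exact inf_eq_left.mp (hinj h1)
    constructor
    · intro G
      refine ⟨⟨_, upF G⟩, Subtype.ext ?_⟩
      ext a
      constructor
      · rintro ⟨g, hg, hle⟩
        exact G.2.2.1 hg (θrefl hle)
      · intro ha
        exact ⟨a, ha, le_refl _⟩
    · intro E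
      refine ⟨⟨_, dnD E⟩, Subtype.ext ?_⟩
      ext a
      constructor
      · rintro ⟨g, hg, hle⟩
        exact E.2.2.1 hg (θrefl hle)
      · intro ha
        exact ⟨a, ha, le_refl _⟩
  · -- surjectivity of θ
    intro hsurj
    have αinj : Function.Injective αθ := by
      intro F F' h
      exact Subtype.ext (Set.preimage_injective.mpr hsurj (congrArg Subtype.val h))
    have βinj : Function.Injective βθ := by
      intro D D' h
      exact Subtype.ext (Set.preimage_injective.mpr hsurj (congrArg Subtype.val h))
    have presR : ∀ (F : Filt M) (D : Idl M), canR F D → canR (αθ F) (βθ D) := by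
      rintro F D ⟨b, hb1, hb2⟩
      obtain ⟨a, rfl⟩ := hsurj b
      exact ⟨a, hb1, hb2⟩
    have presS : ∀ (Fs : Fin n → Filt M) (D : Idl M),
        SL fM Fs D → SL fL (fun i => αθ (Fs i)) (βθ D) := by
      rintro Fs D ⟨b, hb, hfb⟩
      choose a ha using fun i => hsurj (b i)
      refine ⟨a, fun i => ?_, ?_⟩
      · show θ (a i) ∈ (Fs i).val
        rw [ha i]; exact hb i
      · show θ (fL a) ∈ D.val
        rw [hfθ]
        have he : (fun i => θ (a i)) = b := funext ha
        rw [he]; exact hfb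
    have presT : ∀ (F : Filt M) (Ds : Fin m → Idl M),
        TL gM F Ds → TL gL (αθ F) (fun i => βθ (Ds i)) := by
      rintro F Ds ⟨b, hb, hgb⟩
      choose a ha using fun i => hsurj (b i)
      refine ⟨a, fun i => ?_, ?_⟩
      · show θ (a i) ∈ (Ds i).val
        rw [ha i]; exact hb i
      · show θ (gL a) ∈ F.val
        rw [hgθ]
        have he : (fun i => θ (a i)) = b := funext ha
        rw [he]; exact hgb
    -- the inverse maps
    let α' : ↥(Set.range αθ) → Filt M := fun x => Classical.choose x.2
    let β' : ↥(Set.range βθ) → Idl M := fun y => Classical.choose y.2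
    have hα' : ∀ x : ↥(Set.range αθ), αθ (α' x) = x.val := fun x => Classical.choose_spec x.2
    have hβ' : ∀ y : ↥(Set.range βθ), βθ (β' y) = y.val := fun y => Classical.choose_spec y.2
    have hα'2 : ∀ F : Filt M, α' ⟨αθ F, Set.mem_range_self F⟩ = F :=
      fun F => αinj (hα' ⟨αθ F, Set.mem_range_self F⟩)
    have hβ'2 : ∀ D : Idl M, β' ⟨βθ D, Set.mem_range_self D⟩ = D :=
      fun D => βinj (hβ' ⟨βθ D, Set.mem_range_self D⟩)
    have hαx : ∀ x : ↥(Set.range αθ),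
        (⟨αθ (α' x), Set.mem_range_self (α' x)⟩ : ↥(Set.range αθ)) = x :=
      fun x => Subtype.ext (hα' x)
    have hβy : ∀ y : ↥(Set.range βθ),
        (⟨βθ (β' y), Set.mem_range_self (β' y)⟩ : ↥(Set.range βθ)) = y :=
      fun y => Subtype.ext (hβ' y)
    refine ⟨αinj, βinj, presR, presS, presT, ?_, α', β', ?_, hα'2, hβ'2, hα', hβ'⟩
    · -- forward morphism onto the image
      refine ⟨?_, ?_, ?_, ?_, ?_, ?_, ?_, ?_, ?_⟩
      · intro F F' h
        intro y' hy' x hx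
        rw [Set.mem_singleton_iff] at hx; subst hx
        obtain ⟨D, hDv⟩ := y'.2
        have h1 : canR (αθ F) y'.val := hy' _ rfl
        rw [← hDv] at h1
        show canR (αθ F') y'.val
        rw [← hDv]
        refine presR F' D ?_
        obtain ⟨b, hb1, hb2⟩ := backRm F D h1
        exact ⟨b, le1_canR_iff.mp h hb1, hb2⟩
      · intro D D' h
        intro x' hx' y hy
        rw [Set.mem_singleton_iff] at hy; subst hy
        obtain ⟨F, hFv⟩ := x'.2
        have h1 : canR x'.val (βθ D) := hx' _ rfl
        rw [← hFv] at h1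
        show canR x'.val (βθ D')
        rw [← hFv]
        refine presR F D' ?_
        obtain ⟨b, hb1, hb2⟩ := backRm F D h1
        exact ⟨b, hb1, le2_canR_iff.mp h hb2⟩
      · intro F D h
        exact backRm F D h
      · intro x' D h
        have hle : le1 (imR (canR (L := L)) αθ βθ) x' ⟨αθ (α' x'), Set.mem_range_self _⟩ := by
          rw [hαx x']
          exact fun _ h => h
        have hc := h (α' x') hle
        show canR x'.val (βθ D)
        rw [← hα' x']
        exact presR _ _ hc
      · intro F y' h
        have hle : le2 (imR (canR (L := L)) αθ βθ) y' ⟨βθ (β' y'), Set.mem_range_self _⟩ := by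
          rw [hβy y']
          exact fun _ h => h
        have hc := h (β' y') hle
        show canR (αθ F) y'.val
        rw [← hβ' y']
        exact presR _ _ hc
      · intro Fs D h
        exact backSm Fs D h
      · intro xs' D h
        have hle : ∀ i, le1 (imR (canR (L := L)) αθ βθ) (xs' i)
            ⟨αθ (α' (xs' i)), Set.mem_range_self _⟩ := by
          intro i
          rw [hαx (xs' i)]
          exact fun _ h => h
        have hc := h (fun i => α' (xs' i)) hle
        show SL fL (fun i => (xs' i).val) (βθ D)
        have he : (fun i => (xs' i).val) = fun i => αθ (α' (xs' i)) :=
          funext fun i => (hα' (xs' i)).symm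
        rw [he]
        exact presS _ _ hc
      · intro F Ds h
        exact backTm F Ds h
      · intro F ys' h
        have hle : ∀ i, le2 (imR (canR (L := L)) αθ βθ) (ys' i)
            ⟨βθ (β' (ys' i)), Set.mem_range_self _⟩ := by
          intro i
          rw [hβy (ys' i)]
          exact fun _ h => h
        have hc := h (fun i => β' (ys' i)) hle
        show TL gL (αθ F) (fun i => (ys' i).val)
        have he : (fun i => (ys' i).val) = fun i => βθ (β' (ys' i)) :=
          funext fun i => (hβ' (ys' i)).symm
        rw [he]
        exact presT _ _ hc
    · -- inverse morphism
      refine ⟨?_, ?_, ?_, ?_, ?_, ?_, ?_, ?_, ?_⟩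
      · intro x z h
        refine le1_canR_iff.mpr ?_
        intro b hb
        have h1 : canR (α' x) ⟨{c | c ≤ b}, principalIdeal' b⟩ := ⟨b, hb, le_refl b⟩
        have h2 : imR (canR (L := L)) αθ βθ x
            ⟨βθ ⟨{c | c ≤ b}, principalIdeal' b⟩, Set.mem_range_self _⟩ := by
          show canR x.val _
          rw [← hα' x]
          exact presR _ _ h1
        have h3 : (⟨βθ ⟨{c | c ≤ b}, principalIdeal' b⟩, Set.mem_range_self _⟩ :
            ↥(Set.range βθ)) ∈ rpolar (imR (canR (L := L)) αθ βθ) {x} := by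
          intro w hw
          rw [Set.mem_singleton_iff] at hw; subst hw
          exact h2
        have h4 := h h3 z rfl
        have h5 : canR (αθ (α' z)) (βθ ⟨{c | c ≤ b}, principalIdeal' b⟩) := by
          rw [hα' z]; exact h4
        obtain ⟨c, hc1, hc2⟩ := backRm _ _ h5
        exact (α' z).2.2.1 hc1 hc2
      · intro y w h
        refine le2_canR_iff.mpr ?_
        intro b hb
        have h1 : canR ⟨{c | b ≤ c}, principalFilter' b⟩ (β' y) := ⟨b, le_refl b, hb⟩
        have h2 : imR (canR (L := L)) αθ βθ
            ⟨αθ ⟨{c | b ≤ c}, principalFilter' b⟩, Set.mem_range_self _⟩ y := by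
          show canR _ y.val
          rw [← hβ' y]
          exact presR _ _ h1
        have h3 : (⟨αθ ⟨{c | b ≤ c}, principalFilter' b⟩, Set.mem_range_self _⟩ :
            ↥(Set.range αθ)) ∈ lpolar (imR (canR (L := L)) αθ βθ) {y} := by
          intro w' hw'
          rw [Set.mem_singleton_iff] at hw'; subst hw'
          exact h2
        have h4 := h h3 w rfl
        have h5 : canR (αθ ⟨{c | b ≤ c}, principalFilter' b⟩) (βθ (β' w)) := by
          rw [hβ' w]; exact h4
        obtain ⟨c, hc1, hc2⟩ := backRm _ _ h5
        exact (β' w).2.2.1 hc2 hc1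
      · intro x y h
        show canR x.val y.val
        rw [← hα' x, ← hβ' y]
        exact presR _ _ h
      · intro x' y h
        have hle : le1 (canR (L := M)) x' (α' ⟨αθ x', Set.mem_range_self x'⟩) := by
          rw [hα'2 x']
          exact fun _ h => h
        have h5 := h ⟨αθ x', Set.mem_range_self x'⟩ hle
        have h6 : canR (αθ x') (βθ (β' y)) := by
          rw [hβ' y]; exact h5
        exact backRm _ _ h6
      · intro x y' h
        have hle : le2 (canR (L := M)) y' (β' ⟨βθ y', Set.mem_range_self y'⟩) := by
          rw [hβ'2 y']
          exact fun _ h => h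
        have h5 := h ⟨βθ y', Set.mem_range_self y'⟩ hle
        have h6 : canR (αθ (α' x)) (βθ y') := by
          rw [hα' x]; exact h5
        exact backRm _ _ h6
      · intro xs y h
        show SL fL (fun i => (xs i).val) y.val
        have he : (fun i => (xs i).val) = fun i => αθ (α' (xs i)) :=
          funext fun i => (hα' (xs i)).symm
        rw [he, ← hβ' y]
        exact presS _ _ h
      · intro xs' y h
        have hle : ∀ i, le1 (canR (L := M)) (xs' i)
            (α' ⟨αθ (xs' i), Set.mem_range_self (xs' i)⟩) := by
          intro i
          rw [hα'2 (xs' i)]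
          exact fun _ h => h
        have hc := h (fun i => ⟨αθ (xs' i), Set.mem_range_self (xs' i)⟩) hle
        have h6 : SL fL (fun i => αθ (xs' i)) (βθ (β' y)) := by
          rw [hβ' y]; exact hc
        exact backSm _ _ h6
      · intro x ys h
        show TL gL x.val (fun i => (ys i).val)
        have he : (fun i => (ys i).val) = fun i => βθ (β' (ys i)) :=
          funext fun i => (hβ' (ys i)).symm
        rw [he, ← hα' x]
        exact presT _ _ h
      · intro x ys' h
        have hle : ∀ i, le2 (canR (L := M)) (ys' i)
            (β' ⟨βθ (ys' i), Set.mem_range_self (ys' i)⟩) := by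
          intro i
          rw [hβ'2 (ys' i)]
          exact fun _ h => h
        have hc := h (fun i => ⟨βθ (ys' i), Set.mem_range_self (ys' i)⟩) hle
        have h6 : TL gL (αθ (α' x)) (fun i => βθ (ys' i)) := by
          rw [hα' x]; exact hc
        exact backTm _ _ h6
end

section
/- Let {P_j = (X_j, Y_j, R_j, S_j, T_j) : j ∈ J} be a family of Ω-polarities and Σ_J P_j their direct sum. Then all sections of S_J and of T_J are stable, so Σ_J P_j is an Ω-polarity; and the map θ sending a stable subset A of Σ_J X_j to the family θ(A) = (j ↦ {x ∈ X_j : (x, j) ∈ A}) is a bijection from the stable subsets of Σ_J X_j (in Σ_J P_j) onto the product ∏_{j∈J} P_j⁺ of the stable set lattices, with both θ and θ⁻¹ inclusion-preserving (so (Σ_J P_j)⁺ is isomorphic to ∏_J P_j⁺ as complete lattices), and θ commutes with the induced operators: θ(f_{S_J}(A₀,…,A_{n−1}))(j) = f_{S_j}(θ(A₀)(j),…,θ(A_{n−1})(j)) and θ(g_{T_J}(A₀,…,A_{m−1}))(j) = g_{T_j}(θ(A₀)(j),…,θ(A_{m−1})(j)) for every j ∈ J. -/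
/-- The polarity relation of the direct sum: `(x, j) R_J (y, k)` iff `j ≠ k`, or `j = k`
and `x R_k y`. -/
def sumR {J : Type*} {X Y : J → Type*} (R : ∀ j, X j → Y j → Prop) :
    (Σ j, X j) → (Σ j, Y j) → Prop :=
  fun p q => ∀ h : q.1 = p.1, R p.1 p.2 (cast (congrArg Y h) q.2)

/-- The `S`-relation of the direct sum: `((x₀, j₀), …, (x_{n−1}, j_{n−1})) S_J (y, k)` iff
some `jᵢ ≠ k`, or all `jᵢ = k` and `(x₀, …, x_{n−1}) S_k y`. -/
def sumS {J : Type*} {X Y : J → Type*} {n : ℕ}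
    (S : ∀ j, (Fin n → X j) → Y j → Prop) :
    (Fin n → Σ j, X j) → (Σ j, Y j) → Prop :=
  fun xs q => ∀ h : ∀ i, (xs i).1 = q.1,
    S q.1 (fun i => cast (congrArg X (h i)) (xs i).2) q.2

/-- The `T`-relation of the direct sum: `(x, k) T_J ((y₀, j₀), …, (y_{m−1}, j_{m−1}))` iff
some `jᵢ ≠ k`, or all `jᵢ = k` and `x T_k (y₀, …, y_{m−1})`. -/
def sumT {J : Type*} {X Y : J → Type*} {m : ℕ}
    (T : ∀ j, X j → (Fin m → Y j) → Prop) :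
    (Σ j, X j) → (Fin m → Σ j, Y j) → Prop :=
  fun p ys => ∀ h : ∀ i, (ys i).1 = p.1,
    T p.1 p.2 (fun i => cast (congrArg Y (h i)) (ys i).2)

/-- For a subset `A` of `Σ_J X_j`, its `j`-th component `{x ∈ X_j : (x, j) ∈ A}`. -/
def sumTheta {J : Type*} {X : J → Type*} (A : Set (Σ j, X j)) (j : J) : Set (X j) :=
  {x | (⟨j, x⟩ : Σ j, X j) ∈ A}


section AuxStmt18

variable {J : Type*} {X Y : J → Type*}

/-- The `j`-th component of a subset of `Σ_J Y_j`. -/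
def sumThetaY {J : Type*} {Y : J → Type*} (B : Set (Σ j, Y j)) (j : J) : Set (Y j) :=
  {y | (⟨j, y⟩ : Σ j, Y j) ∈ B}

lemma sigma_eta (p : Σ j, X j) {k : J} (h : p.1 = k) :
    (⟨k, cast (congrArg X h) p.2⟩ : Σ j, X j) = p := by
  rcases p with ⟨j, x⟩; cases h; rfl

lemma cast_snd {p q : Σ j, X j} {k : J} (hpq : p = q) (h : p.1 = k) (h' : q.1 = k) :
    cast (congrArg X h) p.2 = cast (congrArg X h') q.2 := by
  subst hpq; rfl

lemma mem_rpolar_sum (R : ∀ j, X j → Y j → Prop) (A : Set (Σ j, X j)) {k : J} (y : Y k) :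
    (⟨k, y⟩ : Σ j, Y j) ∈ rpolar (sumR R) A ↔ y ∈ rpolar (R k) (sumTheta A k) := by
  constructor
  · intro h x hx
    exact h ⟨k, x⟩ hx rfl
  · rintro h ⟨j, x⟩ hx hk
    cases hk
    exact h x hx

lemma mem_lpolar_sum (R : ∀ j, X j → Y j → Prop) (B : Set (Σ j, Y j)) {k : J} (x : X k) :
    (⟨k, x⟩ : Σ j, X j) ∈ lpolar (sumR R) B ↔ x ∈ lpolar (R k) (sumThetaY B k) := by
  constructor
  · intro h y hy
    exact h ⟨k, y⟩ hy rfl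
  · rintro h ⟨j, y⟩ hy hk
    cases hk
    exact h y hy

lemma sumTheta_lpolar (R : ∀ j, X j → Y j → Prop) (B : Set (Σ j, Y j)) (j : J) :
    sumTheta (lpolar (sumR R) B) j = lpolar (R j) (sumThetaY B j) :=
  Set.ext fun x => mem_lpolar_sum R B x

lemma sumThetaY_rpolar (R : ∀ j, X j → Y j → Prop) (A : Set (Σ j, X j)) (j : J) :
    sumThetaY (rpolar (sumR R) A) j = rpolar (R j) (sumTheta A j) :=
  Set.ext fun y => mem_rpolar_sum R A y

lemma sumTheta_cl (R : ∀ j, X j → Y j → Prop) (A : Set (Σ j, X j)) (j : J) :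
    sumTheta (lpolar (sumR R) (rpolar (sumR R) A)) j
      = lpolar (R j) (rpolar (R j) (sumTheta A j)) := by
  rw [sumTheta_lpolar, sumThetaY_rpolar]

lemma sumThetaY_cl (R : ∀ j, X j → Y j → Prop) (B : Set (Σ j, Y j)) (j : J) :
    sumThetaY (rpolar (sumR R) (lpolar (sumR R) B)) j
      = rpolar (R j) (lpolar (R j) (sumThetaY B j)) := by
  rw [sumThetaY_rpolar, sumTheta_lpolar]

lemma stableX_sum_iff (R : ∀ j, X j → Y j → Prop) (A : Set (Σ j, X j)) :
    StableX (sumR R) A ↔ ∀ j, StableX (R j) (sumTheta A j) := by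
  constructor
  · intro h j
    have h' : A = lpolar (sumR R) (rpolar (sumR R) A) := h
    show sumTheta A j = _
    rw [← sumTheta_cl, ← h']
  · intro h
    have h2 : ∀ j, sumTheta A j = sumTheta (lpolar (sumR R) (rpolar (sumR R) A)) j := by
      intro j; rw [sumTheta_cl]; exact h j
    exact Set.ext fun ⟨j, x⟩ => Set.ext_iff.mp (h2 j) x

lemma stableY_sum_of (R : ∀ j, X j → Y j → Prop) {B : Set (Σ j, Y j)}
    (h : ∀ j, StableY (R j) (sumThetaY B j)) : StableY (sumR R) B := by
  have h2 : ∀ j, sumThetaY B j = sumThetaY (rpolar (sumR R) (lpolar (sumR R) B)) j := by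
    intro j; rw [sumThetaY_cl]; exact h j
  exact Set.ext fun ⟨j, y⟩ => Set.ext_iff.mp (h2 j) y

lemma stableX_univ {X Y : Type*} (R : X → Y → Prop) : StableX R (Set.univ : Set X) :=
  Set.Subset.antisymm (fun x _ y hy => hy x trivial) (fun _ _ => trivial)

lemma stableY_univ {X Y : Type*} (R : X → Y → Prop) : StableY R (Set.univ : Set Y) :=
  Set.Subset.antisymm (fun y _ x hx => hx y trivial) (fun _ _ => trivial)

lemma stableX_of_nonempty {X Y : Type*} (R : X → Y → Prop) {C : Set X}
    (h : Nonempty X → StableX R C) : StableX R C :=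
  Set.ext fun x => Set.ext_iff.mp (h ⟨x⟩) x

lemma stableY_of_nonempty {X Y : Type*} (R : X → Y → Prop) {C : Set Y}
    (h : Nonempty Y → StableY R C) : StableY R C :=
  Set.ext fun y => Set.ext_iff.mp (h ⟨y⟩) y

/-- Cast a family of sigma elements into a single component, defaulting to `x0`. -/
noncomputable def proj {n : ℕ} (xs : Fin n → Σ j, X j) (k : J) (x0 : X k) :
    Fin n → X k :=
  fun i => @dite _ ((xs i).1 = k) (Classical.dec _)
    (fun h => cast (congrArg X h) (xs i).2) (fun _ => x0)

lemma proj_pos {n : ℕ} (xs : Fin n → Σ j, X j) (k : J) (x0 : X k) {i : Fin n}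
    (h : (xs i).1 = k) : proj xs k x0 i = cast (congrArg X h) (xs i).2 :=
  dif_pos h

lemma castfun_update {n : ℕ} (xs : Fin n → Σ j, X j) (i : Fin n) {k : J} (x x0 : X k)
    (H : ∀ i', (Function.update xs i ⟨k, x⟩ i').1 = k) :
    (fun i' => cast (congrArg X (H i')) ((Function.update xs i ⟨k, x⟩) i').2)
      = Function.update (proj xs k x0) i x := by
  funext i'
  by_cases hi : i' = i
  · subst hi
    conv_rhs => rw [Function.update_self]
    exact cast_snd (Function.update_self i' ⟨k, x⟩ xs) (H i') rfl
  · have hx' : (xs i').1 = k := by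
      have h2 := H i'
      rwa [Function.update_of_ne hi] at h2
    conv_rhs => rw [Function.update_of_ne hi]
    rw [proj_pos xs k x0 hx']
    exact cast_snd (Function.update_of_ne hi ⟨k, x⟩ xs) (H i') hx'

end AuxStmt18

/-- The direct sum of a family of Ω-polarities is an Ω-polarity, and its stable set
lattice is isomorphic (as a complete lattice with operators) to the direct product of the
stable set lattices of the summands, via `θ(A)(j) = {x : (x, j) ∈ A}`. -/
theorem stmt18 {J : Type*} {X Y : J → Type*} {n m : ℕ}
    (R : ∀ j, X j → Y j → Prop)
    (S : ∀ j, (Fin n → X j) → Y j → Prop)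
    (T : ∀ j, X j → (Fin m → Y j) → Prop)
    (hS : ∀ j, SSectionsStable (R j) (S j))
    (hT : ∀ j, TSectionsStable (R j) (T j)) :
    -- the direct sum is an Ω-polarity
    SSectionsStable (sumR R) (sumS S) ∧
    TSectionsStable (sumR R) (sumT T) ∧
    -- `θ` maps stable sets to families of stable sets
    (∀ A : Set (Σ j, X j), StableX (sumR R) A →
      ∀ j, StableX (R j) (sumTheta A j)) ∧
    -- `θ` is injective on stable sets
    (∀ A B : Set (Σ j, X j), StableX (sumR R) A → StableX (sumR R) B →
      (∀ j, sumTheta A j = sumTheta B j) → A = B) ∧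
    -- `θ` is surjective onto families of stable sets
    (∀ B : ∀ j, Set (X j), (∀ j, StableX (R j) (B j)) →
      ∃ A : Set (Σ j, X j), StableX (sumR R) A ∧ ∀ j, sumTheta A j = B j) ∧
    -- `θ` and its inverse preserve inclusion
    (∀ A B : Set (Σ j, X j), StableX (sumR R) A → StableX (sumR R) B →
      (A ⊆ B ↔ ∀ j, sumTheta A j ⊆ sumTheta B j)) ∧
    -- `θ` commutes with the induced operators
    (∀ As : Fin n → Set (Σ j, X j), (∀ i, StableX (sumR R) (As i)) →
      ∀ j, sumTheta (fS (sumR R) (sumS S) As) j =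
        fS (R j) (S j) (fun i => sumTheta (As i) j)) ∧
    (∀ As : Fin m → Set (Σ j, X j), (∀ i, StableX (sumR R) (As i)) →
      ∀ j, sumTheta (gT (sumR R) (sumT T) As) j =
        gT (R j) (T j) (fun i => sumTheta (As i) j)) := by
  refine ⟨⟨?_, ?_⟩, ⟨?_, ?_⟩, ?_, ?_, ?_, ?_, ?_, ?_⟩
  · -- Y-sections of sumS are stable
    intro xs
    apply stableY_sum_of
    intro k
    by_cases H : ∀ i, (xs i).1 = k
    · have e : sumThetaY {q | sumS S xs q} k
          = {y | S k (fun i => cast (congrArg X (H i)) (xs i).2) y} := by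
        ext y
        exact ⟨fun hy => hy H, fun hy h => hy⟩
      rw [e]; exact (hS k).1 _
    · have e : sumThetaY {q | sumS S xs q} k = Set.univ := by
        ext y
        simp only [Set.mem_univ, iff_true]
        intro h
        exact absurd h H
      rw [e]; exact stableY_univ _
  · -- X-sections of sumS are stable
    rintro xs i ⟨k, y⟩
    apply (stableX_sum_iff R _).mpr
    intro j
    by_cases hjk : j = k
    · subst hjk
      by_cases H : ∀ i', i' ≠ i → (xs i').1 = j
      · apply stableX_of_nonempty
        rintro ⟨x0⟩
        have e : sumTheta {p | sumS S (Function.update xs i p) ⟨j, y⟩} j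
            = {x' | S j (Function.update (proj xs j x0) i x') y} := by
          ext x
          have H' : ∀ i', (Function.update xs i ⟨j, x⟩ i').1 = j := by
            intro i'
            by_cases hi : i' = i
            · subst hi; rw [Function.update_self]
            · rw [Function.update_of_ne hi]; exact H i' hi
          constructor
          · intro hx
            have h2 := hx H'
            rwa [castfun_update xs i x x0 H'] at h2
          · intro hx h
            rw [castfun_update xs i x x0 h]
            exact hx
        rw [e]
        exact (hS j).2 (proj xs j x0) i y
      · have e : sumTheta {p | sumS S (Function.update xs i p) ⟨j, y⟩} j = Set.univ := by
          ext x
          simp only [Set.mem_univ, iff_true]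
          intro h
          refine absurd (fun i' hi => ?_) H
          have h2 := h i'
          rwa [Function.update_of_ne hi] at h2
        rw [e]; exact stableX_univ _
    · have e : sumTheta {p | sumS S (Function.update xs i p) ⟨k, y⟩} j = Set.univ := by
        ext x
        simp only [Set.mem_univ, iff_true]
        intro h
        have h2 := h i
        rw [Function.update_self] at h2
        exact absurd h2 hjk
      rw [e]; exact stableX_univ _
  · -- X-sections of sumT are stable
    intro ys
    apply (stableX_sum_iff R _).mpr
    intro k
    by_cases H : ∀ i, (ys i).1 = k
    · have e : sumTheta {p | sumT T p ys} k
          = {x | T k x (fun i => cast (congrArg Y (H i)) (ys i).2)} := by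
        ext x
        exact ⟨fun hx => hx H, fun hx h => hx⟩
      rw [e]; exact (hT k).1 _
    · have e : sumTheta {p | sumT T p ys} k = Set.univ := by
        ext x
        simp only [Set.mem_univ, iff_true]
        intro h
        exact absurd h H
      rw [e]; exact stableX_univ _
  · -- Y-sections of sumT are stable
    rintro ⟨k, xx⟩ ys i
    apply stableY_sum_of
    intro j
    by_cases hjk : j = k
    · subst hjk
      by_cases H : ∀ i', i' ≠ i → (ys i').1 = j
      · apply stableY_of_nonempty
        rintro ⟨y0⟩
        have e : sumThetaY {q | sumT T ⟨j, xx⟩ (Function.update ys i q)} j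
            = {y' | T j xx (Function.update (proj ys j y0) i y')} := by
          ext y
          have H' : ∀ i', (Function.update ys i ⟨j, y⟩ i').1 = j := by
            intro i'
            by_cases hi : i' = i
            · subst hi; rw [Function.update_self]
            · rw [Function.update_of_ne hi]; exact H i' hi
          constructor
          · intro hy
            have h2 := hy H'
            rwa [castfun_update ys i y y0 H'] at h2
          · intro hy h
            rw [castfun_update ys i y y0 h]
            exact hy
        rw [e]
        exact (hT j).2 xx (proj ys j y0) i
      · have e : sumThetaY {q | sumT T ⟨j, xx⟩ (Function.update ys i q)} j
            = Set.univ := by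
          ext y
          simp only [Set.mem_univ, iff_true]
          intro h
          refine absurd (fun i' hi => ?_) H
          have h2 := h i'
          rwa [Function.update_of_ne hi] at h2
        rw [e]; exact stableY_univ _
    · have e : sumThetaY {q | sumT T ⟨k, xx⟩ (Function.update ys i q)} j
          = Set.univ := by
        ext y
        simp only [Set.mem_univ, iff_true]
        intro h
        have h2 := h i
        rw [Function.update_self] at h2
        exact absurd h2 hjk
      rw [e]; exact stableY_univ _
  · -- theta maps stable sets to stable sets
    exact fun A hA => (stableX_sum_iff R A).mp hA
  · -- injectivity
    intro A B _ _ h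
    ext ⟨j, x⟩
    exact Set.ext_iff.mp (h j) x
  · -- surjectivity
    intro B hB
    refine ⟨{p : Σ j, X j | p.2 ∈ B p.1}, ?_, fun j => rfl⟩
    apply (stableX_sum_iff R _).mpr
    intro j
    have e : sumTheta {p : Σ j, X j | p.2 ∈ B p.1} j = B j := rfl
    rw [e]; exact hB j
  · -- inclusion preservation
    intro A B _ _
    exact ⟨fun h j x hx => h hx, fun h p hp => h p.1 hp⟩
  · -- commutation with fS
    intro As _ j
    unfold fS
    rw [sumTheta_lpolar]
    have e : sumThetaY {y | ∀ xs : Fin n → (Σ j, X j), (∀ i, xs i ∈ As i) → sumS S xs y} j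
        = {y | ∀ xs' : Fin n → X j, (∀ i, xs' i ∈ sumTheta (As i) j) → S j xs' y} := by
      ext y
      constructor
      · intro hy xs' hxs'
        exact hy (fun i => ⟨j, xs' i⟩) hxs' (fun i => rfl)
      · intro hy xs hxs h
        refine hy _ (fun i => ?_)
        show (⟨j, cast (congrArg X (h i)) (xs i).2⟩ : Σ j, X j) ∈ As i
        rw [sigma_eta (xs i) (h i)]
        exact hxs i
    rw [e]
  · -- commutation with gT
    intro As _ j
    ext x
    simp only [gT, sumTheta, Set.mem_setOf_eq]
    constructor
    · intro hx ys' hys'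
      exact hx (fun i => ⟨j, ys' i⟩)
        (fun i => (mem_rpolar_sum R (As i) (ys' i)).mpr (hys' i)) (fun i => rfl)
    · intro hx ys hys h
      refine hx (fun i => cast (congrArg Y (h i)) (ys i).2) (fun i => ?_)
      apply (mem_rpolar_sum R (As i) _).mp
      rw [sigma_eta (ys i) (h i)]
      exact hys i
end
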